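/- arXiv:1803.03020 — 5 statements merged into one kernel-verified Lean document; each statement's English description precedes it below -/
import Mathlib

section
/- Let f be analytic in a neighborhood of the closed unit disk with f(0)=0. Then for each k ≥ 0, the moment M_k = (1/(2πi)) ∫_D f(ζ)^k |f'(ζ)|² dζ̄ dζ equals the boundary integral (1/(2πi)) ∮_{∂D} f(ζ)^k f*(ζ) f'(ζ) dζ, where f*(ζ) = conj(f(1/ζ̄)). -/
open Complex MeasureTheory Metric Set
open scoped Real
set_option maxHeartbeats 800000


noncomputable section GreenAux

/-- inner product term -/
private def PP (g h : ℂ → ℂ) (w : ℂ) : ℂ := g w * (starRingEnd ℂ) (h w)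

private def QQ (g h : ℂ → ℂ) (w : ℂ) : ℂ := g w * (starRingEnd ℂ) (deriv h w)

/-- boundary integrand at radius r -/
private def AA (g h : ℂ → ℂ) (r θ : ℝ) : ℂ :=
  I * circleMap 0 r θ * PP g h (circleMap 0 r θ)

/-- ∂/∂r of AA -/
private def DD (g h : ℂ → ℂ) (r θ : ℝ) : ℂ :=
  I * Complex.exp (θ * I) * PP g h (circleMap 0 r θ) +
    I * circleMap 0 r θ *
      ((deriv g (circleMap 0 r θ) * Complex.exp (θ * I)) * (starRingEnd ℂ) (h (circleMap 0 r θ)) +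
        g (circleMap 0 r θ) *
          (starRingEnd ℂ) (deriv h (circleMap 0 r θ) * Complex.exp (θ * I)))

private def BB (g h : ℂ → ℂ) (r θ : ℝ) : ℂ :=
  Complex.exp (θ * I) * PP g h (circleMap 0 r θ)

/-- ∂/∂θ of BB -/
private def BT (g h : ℂ → ℂ) (r θ : ℝ) : ℂ :=
  Complex.exp (θ * I) * I * PP g h (circleMap 0 r θ) +
    Complex.exp (θ * I) *
      ((deriv g (circleMap 0 r θ) * (circleMap 0 r θ * I)) * (starRingEnd ℂ) (h (circleMap 0 r θ)) +
        g (circleMap 0 r θ) *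
          (starRingEnd ℂ) (deriv h (circleMap 0 r θ) * (circleMap 0 r θ * I)))

private lemma hasDerivAt_conj' {u : ℝ → ℂ} {u' : ℂ} {x : ℝ} (hu : HasDerivAt u u' x) :
    HasDerivAt (fun t => (starRingEnd ℂ) (u t)) ((starRingEnd ℂ) u') x := by
  have := (Complex.conjCLE.toContinuousLinearMap.hasFDerivAt
      (x := u x)).comp_hasDerivAt x hu
  exact this

private lemma mem_cb {r θ : ℝ} (hr : |r| ≤ 1) : circleMap 0 r θ ∈ closedBall (0 : ℂ) 1 := by
  simpa [norm_circleMap_zero] using hr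

variable {g h : ℂ → ℂ}
variable (hg : AnalyticOnNhd ℂ g (closedBall 0 1)) (hh : AnalyticOnNhd ℂ h (closedBall 0 1))
include hg hh

private lemma hasDerivAt_AA {r : ℝ} (θ : ℝ) (hr : |r| ≤ 1) :
    HasDerivAt (fun t : ℝ => AA g h t θ) (DD g h r θ) r := by
  have hz := mem_cb (θ := θ) hr
  have hgz : HasDerivAt g (deriv g (circleMap 0 r θ)) (circleMap 0 r θ) :=
    ((hg _ hz).differentiableAt).hasDerivAt
  have hhz : HasDerivAt h (deriv h (circleMap 0 r θ)) (circleMap 0 r θ) :=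
    ((hh _ hz).differentiableAt).hasDerivAt
  have hφ : HasDerivAt (fun t : ℝ => circleMap 0 t θ) (Complex.exp (θ * I)) r := by
    have h1 : HasDerivAt (fun t : ℝ => (t : ℂ)) 1 r := by exact Complex.ofRealCLM.hasDerivAt
    simpa [circleMap] using HasDerivAt.mul_const h1 (Complex.exp (θ * I))
  have h1 : HasDerivAt (fun t : ℝ => g (circleMap 0 t θ))
      (deriv g (circleMap 0 r θ) * Complex.exp (θ * I)) r := by
    exact HasDerivAt.comp (𝕜' := ℂ) r hgz hφ
  have h2 : HasDerivAt (fun t : ℝ => (starRingEnd ℂ) (h (circleMap 0 t θ)))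
      ((starRingEnd ℂ) (deriv h (circleMap 0 r θ) * Complex.exp (θ * I))) r := by
    refine hasDerivAt_conj' ?_
    exact HasDerivAt.comp (𝕜' := ℂ) r hhz hφ
  have hIz : HasDerivAt (fun t : ℝ => I * circleMap 0 t θ) (I * Complex.exp (θ * I)) r :=
    hφ.const_mul I
  have := hIz.mul (h1.mul h2)
  refine (this.congr_deriv ?_).congr_of_eventuallyEq (Filter.Eventually.of_forall fun t => ?_)
  · simp only [AA, DD, PP, Pi.mul_apply]
  · simp only [AA, DD, PP, Pi.mul_apply]

private lemma hasDerivAt_BB {r : ℝ} (θ : ℝ) (hr : |r| ≤ 1) :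
    HasDerivAt (fun t : ℝ => BB g h r t) (BT g h r θ) θ := by
  have hz := mem_cb (θ := θ) hr
  have hgz : HasDerivAt g (deriv g (circleMap 0 r θ)) (circleMap 0 r θ) :=
    ((hg _ hz).differentiableAt).hasDerivAt
  have hhz : HasDerivAt h (deriv h (circleMap 0 r θ)) (circleMap 0 r θ) :=
    ((hh _ hz).differentiableAt).hasDerivAt
  have hψ : HasDerivAt (fun t : ℝ => circleMap 0 r t) (circleMap 0 r θ * I) θ :=
    hasDerivAt_circleMap 0 r θ
  have hexp : HasDerivAt (fun t : ℝ => Complex.exp (t * I)) (Complex.exp (θ * I) * I) θ := by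
    have h1 := hasDerivAt_circleMap 0 1 θ
    have h2 : (fun t : ℝ => Complex.exp (t * I)) = circleMap 0 1 := by
      funext t; simp [circleMap]
    rw [h2]; simpa [circleMap] using h1
  have h1 : HasDerivAt (fun t : ℝ => g (circleMap 0 r t))
      (deriv g (circleMap 0 r θ) * (circleMap 0 r θ * I)) θ := by
    exact HasDerivAt.comp (𝕜' := ℂ) θ hgz hψ
  have h2 : HasDerivAt (fun t : ℝ => (starRingEnd ℂ) (h (circleMap 0 r t)))
      ((starRingEnd ℂ) (deriv h (circleMap 0 r θ) * (circleMap 0 r θ * I))) θ := by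
    refine hasDerivAt_conj' ?_
    exact HasDerivAt.comp (𝕜' := ℂ) θ hhz hψ
  have := hexp.mul (h1.mul h2)
  refine (this.congr_deriv ?_).congr_of_eventuallyEq (Filter.Eventually.of_forall fun t => ?_)
  · simp only [BB, BT, PP, Pi.mul_apply]
  · simp only [BB, BT, PP, Pi.mul_apply]


omit hg hh in
private lemma DD_eq (g h : ℂ → ℂ) (r θ : ℝ) :
    DD g h r θ = BT g h r θ + 2 * I * (r : ℂ) * QQ g h (circleMap 0 r θ) := by
  have hu : Complex.exp (θ * I) * (starRingEnd ℂ) (Complex.exp (θ * I)) = 1 := by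
    rw [← Complex.exp_conj, ← Complex.exp_add]
    simp [Complex.conj_ofReal]
  simp only [DD, BT, QQ, PP, circleMap_zero, map_mul, Complex.conj_I, Complex.conj_ofReal]
  linear_combination (2 * I * (r : ℂ) * g ((r : ℂ) * Complex.exp (θ * I)) *
    (starRingEnd ℂ) (deriv h ((r : ℂ) * Complex.exp (θ * I)))) * hu

omit hg hh in
private lemma cont_cm : Continuous fun p : ℝ × ℝ => circleMap 0 p.1 p.2 := by
  simp only [circleMap_zero]
  exact (Complex.continuous_ofReal.comp continuous_fst).mul
    (Complex.continuous_exp.comp ((Complex.continuous_ofReal.comp continuous_snd).mul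
      continuous_const))

private def SS : Set (ℝ × ℝ) := Set.Icc (0:ℝ) 1 ×ˢ (Set.univ : Set ℝ)

omit hg hh in
private lemma maps_cb : Set.MapsTo (fun p : ℝ × ℝ => circleMap 0 p.1 p.2) SS
    (closedBall (0:ℂ) 1) := by
  rintro ⟨r, θ⟩ ⟨hr, -⟩
  simp only [mem_closedBall_zero_iff, norm_circleMap_zero]
  exact abs_le.2 ⟨by linarith [hr.1], hr.2⟩

omit hg hh in
private lemma contOn_comp {u : ℂ → ℂ} (hu : ContinuousOn u (closedBall 0 1)) :
    ContinuousOn (fun p : ℝ × ℝ => u (circleMap 0 p.1 p.2)) SS :=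
  hu.comp cont_cm.continuousOn maps_cb

private lemma contOn_DD : ContinuousOn (fun p : ℝ × ℝ => DD g h p.1 p.2) SS := by
  have e1 : ContinuousOn (fun p : ℝ × ℝ => Complex.exp (p.2 * I)) SS :=
    (Complex.continuous_exp.comp ((Complex.continuous_ofReal.comp continuous_snd).mul
      continuous_const)).continuousOn
  have cg := contOn_comp hg.continuousOn
  have cg' := contOn_comp hg.deriv.continuousOn
  have chc : ContinuousOn (fun p : ℝ × ℝ => (starRingEnd ℂ) (h (circleMap 0 p.1 p.2))) SS :=
    (contOn_comp hh.continuousOn).star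
  have chd : ContinuousOn
      (fun p : ℝ × ℝ => (starRingEnd ℂ) (deriv h (circleMap 0 p.1 p.2))) SS :=
    (contOn_comp hh.deriv.continuousOn).star
  have ccm : ContinuousOn (fun p : ℝ × ℝ => circleMap 0 p.1 p.2) SS := cont_cm.continuousOn
  unfold DD PP
  simp only [map_mul]
  exact ((continuousOn_const.mul e1).mul (cg.mul chc)).add
    ((continuousOn_const.mul ccm).mul (((cg'.mul e1).mul chc).add
      (cg.mul (chd.mul e1.star))))

private lemma contOn_BT : ContinuousOn (fun p : ℝ × ℝ => BT g h p.1 p.2) SS := by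
  have e1 : ContinuousOn (fun p : ℝ × ℝ => Complex.exp (p.2 * I)) SS :=
    (Complex.continuous_exp.comp ((Complex.continuous_ofReal.comp continuous_snd).mul
      continuous_const)).continuousOn
  have cg := contOn_comp hg.continuousOn
  have cg' := contOn_comp hg.deriv.continuousOn
  have chc : ContinuousOn (fun p : ℝ × ℝ => (starRingEnd ℂ) (h (circleMap 0 p.1 p.2))) SS :=
    (contOn_comp hh.continuousOn).star
  have chd : ContinuousOn
      (fun p : ℝ × ℝ => (starRingEnd ℂ) (deriv h (circleMap 0 p.1 p.2))) SS :=
    (contOn_comp hh.deriv.continuousOn).star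
  have ccm : ContinuousOn (fun p : ℝ × ℝ => circleMap 0 p.1 p.2) SS := cont_cm.continuousOn
  unfold BT PP
  simp only [map_mul]
  exact ((e1.mul continuousOn_const).mul (cg.mul chc)).add
    (e1.mul (((cg'.mul (ccm.mul continuousOn_const)).mul chc).add
      (cg.mul (chd.mul (ccm.star.mul continuousOn_const)))))

private lemma contOn_Q : ContinuousOn
    (fun p : ℝ × ℝ => QQ g h (circleMap 0 p.1 p.2)) SS := by
  have cg := contOn_comp hg.continuousOn
  have chd : ContinuousOn
      (fun p : ℝ × ℝ => (starRingEnd ℂ) (deriv h (circleMap 0 p.1 p.2))) SS :=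
    (contOn_comp hh.deriv.continuousOn).star
  unfold QQ
  exact cg.mul chd


private lemma contOn_DD_r (θ : ℝ) :
    ContinuousOn (fun t : ℝ => DD g h t θ) (Set.Icc 0 1) := by
  have hmap : Set.MapsTo (fun t : ℝ => (t, θ)) (Set.Icc (0:ℝ) 1) SS := fun t ht => ⟨ht, trivial⟩
  have hc : ContinuousOn (fun t : ℝ => (t, θ)) (Set.Icc (0:ℝ) 1) :=
    (continuous_id.prodMk continuous_const).continuousOn
  have hint := ContinuousOn.comp (contOn_DD hg hh) hc hmap
  exact hint

private lemma cont_BT_th {r : ℝ} (hr0 : 0 ≤ r) (hr1 : r ≤ 1) :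
    ContinuousOn (fun θ : ℝ => BT g h r θ) Set.univ := by
  have hmap : Set.MapsTo (fun θ : ℝ => (r, θ)) (Set.univ : Set ℝ) SS :=
    fun t _ => ⟨⟨hr0, hr1⟩, trivial⟩
  have hc : ContinuousOn (fun θ : ℝ => (r, θ)) (Set.univ : Set ℝ) :=
    (continuous_const.prodMk continuous_id).continuousOn
  have hint := ContinuousOn.comp (contOn_BT hg hh) hc hmap
  exact hint

private lemma cont_Q_th {r : ℝ} (hr0 : 0 ≤ r) (hr1 : r ≤ 1) :
    ContinuousOn (fun θ : ℝ => QQ g h (circleMap 0 r θ)) Set.univ := by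
  have hmap : Set.MapsTo (fun θ : ℝ => (r, θ)) (Set.univ : Set ℝ) SS :=
    fun t _ => ⟨⟨hr0, hr1⟩, trivial⟩
  have hc : ContinuousOn (fun θ : ℝ => (r, θ)) (Set.univ : Set ℝ) :=
    (continuous_const.prodMk continuous_id).continuousOn
  have hint := ContinuousOn.comp (contOn_Q hg hh) hc hmap
  exact hint

private lemma ftc_r (θ : ℝ) : ∫ t in (0:ℝ)..1, DD g h t θ = AA g h 1 θ := by
  have hint : IntervalIntegrable (fun t => DD g h t θ) volume 0 1 := by
    apply ContinuousOn.intervalIntegrable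
    simpa [Set.uIcc_of_le zero_le_one] using contOn_DD_r hg hh θ
  have key := intervalIntegral.integral_eq_sub_of_hasDerivAt (f := fun t => AA g h t θ)
      (f' := fun t => DD g h t θ) ?_ hint
  · have h0 : AA g h 0 θ = 0 := by simp [AA, circleMap]
    simpa [h0] using key
  · intro t ht
    rw [Set.uIcc_of_le zero_le_one] at ht
    exact hasDerivAt_AA hg hh θ (abs_le.2 ⟨by linarith [ht.1], ht.2⟩)

private lemma ftc_theta {r : ℝ} (hr0 : 0 ≤ r) (hr1 : r ≤ 1) :
    ∫ t in (0:ℝ)..(2*π), BT g h r t = 0 := by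
  have hr : |r| ≤ 1 := abs_le.2 ⟨by linarith, hr1⟩
  have hint : IntervalIntegrable (fun t => BT g h r t) volume 0 (2*π) :=
    ((cont_BT_th hg hh hr0 hr1).mono (Set.subset_univ _)).intervalIntegrable
  have key := intervalIntegral.integral_eq_sub_of_hasDerivAt (f := fun t => BB g h r t)
      (f' := fun t => BT g h r t) (fun t _ => hasDerivAt_BB hg hh t hr) hint
  rw [key]
  have hper : circleMap 0 r (2*π) = circleMap 0 r 0 := by
    simpa using (periodic_circleMap 0 r 0)
  simp only [BB, hper]
  push_cast
  rw [Complex.exp_two_pi_mul_I]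
  simp

private lemma intQ {r : ℝ} (hr0 : 0 ≤ r) (hr1 : r ≤ 1) (a b : ℝ) :
    IntervalIntegrable (fun θ => QQ g h (circleMap 0 r θ)) volume a b :=
  ((cont_Q_th hg hh hr0 hr1).mono (Set.subset_univ _)).intervalIntegrable

private lemma inner_eq {t : ℝ} (ht0 : 0 ≤ t) (ht1 : t ≤ 1) :
    ∫ θ in (0:ℝ)..(2*π), DD g h t θ
      = 2 * I * (t:ℂ) * ∫ θ in (0:ℝ)..(2*π), QQ g h (circleMap 0 t θ) := by
  have hBT : IntervalIntegrable (fun θ => BT g h t θ) volume 0 (2*π) :=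
    ((cont_BT_th hg hh ht0 ht1).mono (Set.subset_univ _)).intervalIntegrable
  have hQ := intQ hg hh ht0 ht1 0 (2*π)
  calc ∫ θ in (0:ℝ)..(2*π), DD g h t θ
      = ∫ θ in (0:ℝ)..(2*π),
          (BT g h t θ + 2 * I * (t:ℂ) * QQ g h (circleMap 0 t θ)) := by
        refine intervalIntegral.integral_congr fun θ _ => ?_
        exact DD_eq g h t θ
    _ = (∫ θ in (0:ℝ)..(2*π), BT g h t θ)
          + ∫ θ in (0:ℝ)..(2*π), 2 * I * (t:ℂ) * QQ g h (circleMap 0 t θ) :=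
        intervalIntegral.integral_add hBT (hQ.const_mul _)
    _ = 2 * I * (t:ℂ) * ∫ θ in (0:ℝ)..(2*π), QQ g h (circleMap 0 t θ) := by
        rw [ftc_theta hg hh ht0 ht1, zero_add, intervalIntegral.integral_const_mul]

private lemma swap_int :
    (∫ θ in (0:ℝ)..(2*π), ∫ t in (0:ℝ)..1, DD g h t θ)
      = ∫ t in (0:ℝ)..1, ∫ θ in (0:ℝ)..(2*π), DD g h t θ := by
  have h2π : (0:ℝ) ≤ 2*π := by positivity
  simp only [intervalIntegral.integral_of_le h2π, intervalIntegral.integral_of_le zero_le_one]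
  have hmap : Set.MapsTo (Prod.swap : ℝ × ℝ → ℝ × ℝ)
      (Set.Icc 0 (2*π) ×ˢ Set.Icc 0 1) SS := fun p hp => ⟨hp.2, trivial⟩
  have hsw : ContinuousOn (Prod.swap : ℝ × ℝ → ℝ × ℝ) (Set.Icc 0 (2*π) ×ˢ Set.Icc 0 1) :=
    continuous_swap.continuousOn
  have hcont0 := ContinuousOn.comp (contOn_DD hg hh) hsw hmap
  have hcont : ContinuousOn (fun p : ℝ × ℝ => DD g h p.2 p.1)
      (Set.Icc 0 (2*π) ×ˢ Set.Icc 0 1) := hcont0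
  have hIOn : IntegrableOn (fun p : ℝ × ℝ => DD g h p.2 p.1)
      (Set.Ioc 0 (2*π) ×ˢ Set.Ioc 0 1) volume :=
    (hcont.integrableOn_compact (isCompact_Icc.prod isCompact_Icc)).mono_set
      (Set.prod_mono Set.Ioc_subset_Icc_self Set.Ioc_subset_Icc_self)
  have hI : Integrable (Function.uncurry fun θ t => DD g h t θ)
      ((volume.restrict (Set.Ioc (0:ℝ) (2*π))).prod (volume.restrict (Set.Ioc (0:ℝ) 1))) := by
    rw [Measure.prod_restrict, ← Measure.volume_eq_prod]
    exact hIOn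
  exact MeasureTheory.integral_integral_swap hI

private lemma polar_eq :
    (∫ ζ in ball (0:ℂ) 1, QQ g h ζ)
      = ∫ t in Set.Ioc (0:ℝ) 1,
          ((t:ℂ) * ∫ θ in (0:ℝ)..(2*π), QQ g h (circleMap 0 t θ)) := by
  have hsymm : ∀ p : ℝ × ℝ, Complex.polarCoord.symm p = circleMap 0 p.1 p.2 := by
    intro p
    rw [Complex.polarCoord_symm_apply, circleMap_zero, Complex.exp_mul_I]
    push_cast
    ring
  have key := Complex.integral_comp_polarCoord_symm ((ball (0:ℂ) 1).indicator (QQ g h))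
  rw [MeasureTheory.integral_indicator measurableSet_ball] at key
  rw [← key]
  set W : Set (ℝ × ℝ) := (fun p : ℝ × ℝ => circleMap 0 p.1 p.2) ⁻¹' (ball (0:ℂ) 1) with hW
  have hWm : MeasurableSet W := (isOpen_ball.preimage cont_cm).measurableSet
  have step1 : ∀ p : ℝ × ℝ,
      p.1 • (ball (0:ℂ) 1).indicator (QQ g h) (Complex.polarCoord.symm p)
        = W.indicator (fun q : ℝ × ℝ => q.1 • QQ g h (circleMap 0 q.1 q.2)) p := by
    intro p
    rw [hsymm]
    by_cases hp : p ∈ W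
    · rw [Set.indicator_of_mem hp, Set.indicator_of_mem (Set.mem_preimage.mp hp)]
    · rw [Set.indicator_of_notMem hp,
        Set.indicator_of_notMem (fun hc => hp (Set.mem_preimage.mpr hc)), smul_zero]
  simp only [step1]
  rw [MeasureTheory.setIntegral_indicator hWm]
  have hset : polarCoord.target ∩ W = Set.Ioo (0:ℝ) 1 ×ˢ Set.Ioo (-π) π := by
    ext ⟨r, θ⟩
    simp only [polarCoord_target, Set.mem_inter_iff, Set.mem_prod, Set.mem_Ioi,
      Set.mem_Ioo, hW, Set.mem_preimage, mem_ball_zero_iff,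
      norm_circleMap_zero]
    constructor
    · rintro ⟨⟨h1, h2⟩, h3⟩
      exact ⟨⟨h1, by rwa [abs_of_pos h1] at h3⟩, h2⟩
    · rintro ⟨⟨h1, h3⟩, h2⟩
      exact ⟨⟨h1, h2⟩, by rwa [abs_of_pos h1]⟩
  rw [hset]
  have hsub : (Set.Icc (0:ℝ) 1 ×ˢ Set.Icc (-π) π) ⊆ SS := fun p hp => ⟨hp.1, trivial⟩
  have hcQ : ContinuousOn (fun p : ℝ × ℝ => QQ g h (circleMap 0 p.1 p.2))
      (Set.Icc (0:ℝ) 1 ×ˢ Set.Icc (-π) π) := (contOn_Q hg hh).mono hsub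
  have hcQs : ContinuousOn (fun p : ℝ × ℝ => p.1 • QQ g h (circleMap 0 p.1 p.2))
      (Set.Icc (0:ℝ) 1 ×ˢ Set.Icc (-π) π) := (continuous_fst.continuousOn).smul hcQ
  have hInt : IntegrableOn (fun p : ℝ × ℝ => p.1 • QQ g h (circleMap 0 p.1 p.2))
      (Set.Ioo (0:ℝ) 1 ×ˢ Set.Ioo (-π) π) volume :=
    (hcQs.integrableOn_compact (isCompact_Icc.prod isCompact_Icc)).mono_set
      (Set.prod_mono Set.Ioo_subset_Icc_self Set.Ioo_subset_Icc_self)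
  rw [Measure.volume_eq_prod] at hInt ⊢
  rw [MeasureTheory.setIntegral_prod _ hInt]
  rw [← MeasureTheory.integral_Ioc_eq_integral_Ioo]
  refine setIntegral_congr_fun measurableSet_Ioc fun t ht => ?_
  show (∫ y in Set.Ioo (-π) π, t • QQ g h (circleMap 0 t y))
      = (t:ℂ) * ∫ θ in (0:ℝ)..(2*π), QQ g h (circleMap 0 t θ)
  have hππ : -π ≤ π := by linarith [Real.pi_pos]
  rw [← MeasureTheory.integral_Ioc_eq_integral_Ioo,
    ← intervalIntegral.integral_of_le hππ]
  have hper : Function.Periodic (fun θ : ℝ => t • QQ g h (circleMap 0 t θ)) (2*π) := by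
    intro θ
    simp only [periodic_circleMap 0 t θ]
  have hshift := hper.intervalIntegral_add_eq (-π) 0
  rw [show -π + 2*π = π by ring, zero_add] at hshift
  rw [hshift]
  simp only [Complex.real_smul]
  rw [intervalIntegral.integral_const_mul]

private lemma green_lemma :
    (∮ ζ in C(0, 1), g ζ * (starRingEnd ℂ) (h ζ))
      = 2 * I * ∫ ζ in ball (0:ℂ) 1, QQ g h ζ := by
  have s1 : (∮ ζ in C(0, 1), g ζ * (starRingEnd ℂ) (h ζ))
      = ∫ θ in (0:ℝ)..(2*π), AA g h 1 θ := by
    simp only [circleIntegral, deriv_circleMap, AA, PP, smul_eq_mul]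
    exact intervalIntegral.integral_congr fun θ _ => by ring
  have s2 : (∫ θ in (0:ℝ)..(2*π), AA g h 1 θ)
      = ∫ θ in (0:ℝ)..(2*π), ∫ t in (0:ℝ)..1, DD g h t θ :=
    intervalIntegral.integral_congr fun θ _ => (ftc_r hg hh θ).symm
  have s4 : (∫ t in (0:ℝ)..1, ∫ θ in (0:ℝ)..(2*π), DD g h t θ)
      = ∫ t in Set.Ioc (0:ℝ) 1,
          (2 * I * (t:ℂ) * ∫ θ in (0:ℝ)..(2*π), QQ g h (circleMap 0 t θ)) := by
    rw [intervalIntegral.integral_of_le zero_le_one]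
    refine setIntegral_congr_fun measurableSet_Ioc fun t ht => ?_
    exact inner_eq hg hh ht.1.le ht.2
  rw [s1, s2, swap_int hg hh, s4, polar_eq hg hh, ← MeasureTheory.integral_const_mul]
  refine setIntegral_congr_fun measurableSet_Ioc fun t ht => ?_
  ring
end GreenAux

/-- For `f` analytic in a neighborhood of the closed unit disk with `f 0 = 0`,
the area-integral moment `(1/(2πi)) ∫_D f^k |f'|² dζ̄ dζ = (1/π) ∫_D f^k |f'|² dA`
equals the boundary integral `(1/(2πi)) ∮_{∂D} f^k f* f' dζ`, where
`f*(ζ) = conj (f (1/conj ζ))`. -/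
theorem stmt_0 (f : ℂ → ℂ) (hf : AnalyticOnNhd ℂ f (closedBall 0 1))
    (h0 : f 0 = 0) (k : ℕ) :
    (π : ℂ)⁻¹ * ∫ ζ in ball (0 : ℂ) 1, f ζ ^ k * (((‖deriv f ζ‖ : ℝ) : ℂ)) ^ 2 =
      (2 * π * Complex.I)⁻¹ *
        ∮ ζ in C(0, 1), f ζ ^ k * (starRingEnd ℂ) (f (1 / (starRingEnd ℂ) ζ)) * deriv f ζ := by
  have hga : AnalyticOnNhd ℂ (fun ζ => f ζ ^ k * deriv f ζ) (closedBall 0 1) :=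
    (hf.pow k).mul hf.deriv
  have hb : (∮ ζ in C(0,1), f ζ ^ k * (starRingEnd ℂ) (f (1 / (starRingEnd ℂ) ζ)) * deriv f ζ)
      = ∮ ζ in C(0,1), f ζ ^ k * deriv f ζ * (starRingEnd ℂ) (f ζ) := by
    refine circleIntegral.integral_congr zero_le_one fun ζ hζ => ?_
    have habs : ‖ζ‖ = 1 := by simpa [Complex.dist_eq] using hζ
    have hz0 : ζ ≠ 0 := by
      intro hzz
      rw [hzz] at habs
      simp at habs
    have hc : (starRingEnd ℂ) ζ ≠ 0 := by
      simpa using hz0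
    have hmc : ζ * (starRingEnd ℂ) ζ = 1 := by
      rw [Complex.mul_conj, Complex.normSq_eq_norm_sq, habs]
      norm_num
    have hinv : (1 : ℂ) / (starRingEnd ℂ) ζ = ζ := by
      rw [div_eq_iff hc]
      exact hmc.symm
    rw [hinv]
    ring
  have harea : (∫ ζ in ball (0:ℂ) 1, f ζ ^ k * (((‖deriv f ζ‖ : ℝ) : ℂ)) ^ 2)
      = ∫ ζ in ball (0:ℂ) 1, QQ (fun ζ => f ζ ^ k * deriv f ζ) f ζ := by
    refine integral_congr_ae (Filter.Eventually.of_forall fun ζ => ?_)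
    have habs2 : (((‖deriv f ζ‖ : ℝ) : ℂ)) ^ 2
        = deriv f ζ * (starRingEnd ℂ) (deriv f ζ) := by
      rw [Complex.mul_conj, Complex.normSq_eq_norm_sq]
      norm_cast
    simp only [QQ]
    rw [habs2]
    ring
  rw [harea, hb, green_lemma hga hf]
  have hπ : (π:ℂ) ≠ 0 := Complex.ofReal_ne_zero.mpr Real.pi_ne_zero
  field_simp
end

section
/- Let f(ζ) = Σ_{j=0}^∞ a_j ζ^{j+1} be analytic in a neighborhood of the closed unit disk. Then for each k ≥ 0, the moment M_k = (1/(2πi)) ∮_{∂D} f(ζ)^k f*(ζ) f'(ζ) dζ equals Richardson's formula: M_k = Σ over multi-indices (j_0,...,j_k) ≥ (0,...,0) of (j_0+1) a_{j_0} ⋯ a_{j_k} conj(a_{j_0+...+j_k+k}). -/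
set_option maxHeartbeats 1000000

open Complex MeasureTheory Metric
open scoped Real

lemma aux_hasSum_pow {b : ℕ → ℂ} (hb : Summable fun n => ‖b n‖) {s : ℂ} (h : HasSum b s) (k : ℕ) :
    HasSum (fun j : Fin k → ℕ => ∏ i, b (j i)) (s ^ k) ∧
      Summable (fun j : Fin k → ℕ => ∏ i, ‖b (j i)‖) := by
  induction k with
  | zero =>
    refine ⟨?_, (hasSum_fintype _).summable⟩
    simpa using hasSum_fintype (fun j : Fin 0 → ℕ => ∏ i, b (j i))
  | succ k ih =>
    set e : (ℕ × (Fin k → ℕ)) ≃ (Fin (k + 1) → ℕ) := Fin.consEquiv (fun _ => ℕ) with he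
    have hcomp : ((fun j : Fin (k + 1) → ℕ => ∏ i, b (j i)) ∘ e) =
        fun p : ℕ × (Fin k → ℕ) => b p.1 * ∏ i, b (p.2 i) := by
      funext p
      simp [he, Fin.prod_univ_succ]
    have hcomp' : ((fun j : Fin (k + 1) → ℕ => ∏ i, ‖b (j i)‖) ∘ e) =
        fun p : ℕ × (Fin k → ℕ) => ‖b p.1‖ * ∏ i, ‖b (p.2 i)‖ := by
      funext p
      simp [he, Fin.prod_univ_succ]
    have hsum2 : Summable (fun j : Fin k → ℕ => ‖∏ i, b (j i)‖) := by
      have := ih.2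
      simpa [norm_prod] using this
    have hmul : HasSum (fun p : ℕ × (Fin k → ℕ) => b p.1 * ∏ i, b (p.2 i)) (s * s ^ k) :=
      HasSum.mul (f := b) (g := fun j : Fin k → ℕ => ∏ i, b (j i)) h ih.1
        (summable_mul_of_summable_norm (f := b)
          (g := fun j : Fin k → ℕ => ∏ i, b (j i)) hb hsum2)
    have hmul' : Summable (fun p : ℕ × (Fin k → ℕ) => ‖b p.1‖ * ∏ i, ‖b (p.2 i)‖) :=
      Summable.mul_of_nonneg (f := fun n => ‖b n‖)
        (g := fun j : Fin k → ℕ => ∏ i, ‖b (j i)‖) hb ih.2 (fun n => norm_nonneg _)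
        (fun j => Finset.prod_nonneg fun i _ => norm_nonneg _)
    constructor
    · have := e.hasSum_iff.mp (hcomp ▸ hmul)
      rwa [pow_succ, mul_comm (s ^ k) s]
    · exact e.summable_iff.mp (hcomp' ▸ hmul')

lemma aux_norm_natcast (n : ℕ) : ‖(((n : ℕ) : ℂ) + 1)‖ = (n : ℝ) + 1 := by
  have h : (((n : ℕ) : ℂ) + 1) = ((n + 1 : ℕ) : ℂ) := by push_cast; ring
  rw [h, Complex.norm_natCast]
  push_cast
  ring

lemma aux_summable_np1 {q : ℝ} (h0 : 0 ≤ q) (h1 : q < 1) :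
    Summable fun n : ℕ => ((n : ℝ) + 1) * q ^ n := by
  have hp : Summable fun n : ℕ => (n : ℝ) ^ 1 * q ^ n :=
    summable_pow_mul_geometric_of_norm_lt_one 1 (by rwa [Real.norm_of_nonneg h0])
  exact (hp.add (summable_geometric_of_lt_one h0 h1)).congr fun n => by ring

/-- Richardson's formula: if `f(ζ) = Σ_{j≥0} a_j ζ^{j+1}` is analytic in a
neighborhood of the closed unit disk, then the moment
`M_k = (1/(2πi)) ∮_{∂D} f^k f* f' dζ` equals
`Σ_{(j_0,…,j_k) ≥ 0} (j_0+1) a_{j_0} ⋯ a_{j_k} conj(a_{j_0+⋯+j_k+k})`. -/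
theorem stmt_1 (a : ℕ → ℂ) (f : ℂ → ℂ) (R : ℝ) (hR : 1 < R)
    (hf : ∀ ζ ∈ ball (0 : ℂ) R, HasSum (fun j => a j * ζ ^ (j + 1)) (f ζ)) (k : ℕ) :
    ((2 * π * Complex.I)⁻¹ *
        ∮ ζ in C(0, 1), f ζ ^ k * (starRingEnd ℂ) (f (1 / (starRingEnd ℂ) ζ)) * deriv f ζ) =
      ∑' j : Fin (k + 1) → ℕ,
        (((j 0 : ℕ) : ℂ) + 1) * (∏ i, a (j i)) * (starRingEnd ℂ) (a ((∑ i, j i) + k)) := by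
  classical
  set r₁ : ℝ := 1 + (R - 1) / 3 with hr₁def
  set r₂ : ℝ := 1 + 2 * (R - 1) / 3 with hr₂def
  have h1r₁ : 1 < r₁ := by rw [hr₁def]; linarith
  have hr₁₂ : r₁ < r₂ := by rw [hr₁def, hr₂def]; linarith
  have hr₂R : r₂ < R := by rw [hr₂def]; linarith
  have hr₁0 : 0 < r₁ := by linarith
  have hr₂0 : 0 < r₂ := by linarith
  -- coefficient bound
  obtain ⟨C, hC0, hC⟩ : ∃ C, 0 ≤ C ∧ ∀ j, ‖a j‖ * r₂ ^ (j + 1) ≤ C := by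
    have hmem : (r₂ : ℂ) ∈ ball (0 : ℂ) R := by
      rw [mem_ball_zero_iff, Complex.norm_real, Real.norm_of_nonneg hr₂0.le]
      exact hr₂R
    have hs2 : Summable fun j : ℕ => a j * (r₂ : ℂ) ^ (j + 1) := (hf _ hmem).summable
    have ht : Filter.Tendsto (fun j : ℕ => ‖a j * (r₂ : ℂ) ^ (j + 1)‖)
        Filter.atTop (nhds 0) := by
      simpa using hs2.tendsto_atTop_zero.norm
    obtain ⟨C, hCub⟩ := ht.bddAbove_range
    have hub : ∀ j : ℕ, ‖a j * (r₂ : ℂ) ^ (j + 1)‖ ≤ C := fun j =>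
      hCub (Set.mem_range_self j)
    have hnorm : ∀ j : ℕ, ‖a j * (r₂ : ℂ) ^ (j + 1)‖ = ‖a j‖ * r₂ ^ (j + 1) := by
      intro j
      rw [norm_mul, norm_pow, Complex.norm_real, Real.norm_of_nonneg hr₂0.le]
    refine ⟨C, le_trans (norm_nonneg _) (hub 0), fun j => ?_⟩
    rw [← hnorm j]
    exact hub j
  have hgeo2 : (0:ℝ) ≤ 1 / r₂ ∧ 1 / r₂ < 1 := by
    constructor
    · positivity
    · rw [div_lt_one hr₂0]; linarith
  have hcoef : ∀ n : ℕ, ‖a n‖ ≤ C / r₂ * (1 / r₂) ^ n := by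
    intro n
    have h1 : C / r₂ * (1 / r₂) ^ n = C / r₂ ^ (n + 1) := by
      rw [div_pow, div_mul_div_comm, one_pow, mul_one, ← pow_succ']
    rw [h1, le_div_iff₀ (by positivity)]
    exact hC n
  have hA : Summable fun n => ‖a n‖ := by
    refine Summable.of_nonneg_of_le (fun n => norm_nonneg _) hcoef ?_
    exact (summable_geometric_of_lt_one hgeo2.1 hgeo2.2).mul_left _
  have hA1 : Summable fun n : ℕ => ((n : ℝ) + 1) * ‖a n‖ := by
    have hg : Summable fun n : ℕ => ((n : ℝ) + 1) * (1 / r₂) ^ n :=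
      aux_summable_np1 hgeo2.1 hgeo2.2
    refine Summable.of_nonneg_of_le (fun n : ℕ => by positivity) (fun n : ℕ => ?_) (hg.mul_left (C / r₂))
    calc ((n : ℝ) + 1) * ‖a n‖ ≤ ((n : ℝ) + 1) * (C / r₂ * (1 / r₂) ^ n) := by
          exact mul_le_mul_of_nonneg_left (hcoef n) (by positivity)
      _ = C / r₂ * (((n : ℝ) + 1) * (1 / r₂) ^ n) := by ring
  -- derivative of f on the circle
  have hu : Summable fun n : ℕ => ((n : ℝ) + 1) * ‖a n‖ * r₁ ^ n := by
    have hq0 : (0 : ℝ) ≤ r₁ / r₂ := by positivity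
    have hq1 : r₁ / r₂ < 1 := by rw [div_lt_one hr₂0]; exact hr₁₂
    have hg : Summable fun n : ℕ => ((n : ℝ) + 1) * (r₁ / r₂) ^ n :=
      aux_summable_np1 hq0 hq1
    refine Summable.of_nonneg_of_le (fun n : ℕ => by positivity) (fun n : ℕ => ?_)
      (hg.mul_left (C / r₂))
    calc ((n : ℝ) + 1) * ‖a n‖ * r₁ ^ n
        ≤ ((n : ℝ) + 1) * (C / r₂ * (1 / r₂) ^ n) * r₁ ^ n := by
          have := hcoef n
          gcongr
      _ = C / r₂ * (((n : ℝ) + 1) * (r₁ / r₂) ^ n) := by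
          rw [div_pow, div_pow, one_pow]
          field_simp
  have hderiv : ∀ z ∈ ball (0 : ℂ) r₁,
      HasDerivAt f (∑' n : ℕ, (((n : ℕ) : ℂ) + 1) * a n * z ^ n) z := by
    intro z hz
    have hG : HasDerivAt (fun w : ℂ => ∑' n : ℕ, a n * w ^ (n + 1))
        (∑' n : ℕ, (((n : ℕ) : ℂ) + 1) * a n * z ^ n) z := by
      refine hasDerivAt_tsum_of_isPreconnected
        (g := fun n w => a n * w ^ (n + 1))
        (g' := fun n y => (((n : ℕ) : ℂ) + 1) * a n * y ^ n)
        hu isOpen_ball (convex_ball _ _).isPreconnected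
        (fun n y hy => ?_) (fun n y hy => ?_) (mem_ball_self hr₁0) ?_ hz
      · have h1 : HasDerivAt (fun x : ℂ => a n * x ^ (n + 1))
            (a n * (((n : ℕ) + 1 : ℕ) * y ^ n)) y := by
          simpa using (hasDerivAt_pow (n + 1) y).const_mul (a n)
        refine h1.congr_deriv ?_
        push_cast
        ring
      · rw [norm_mul, norm_mul]
        have h1 : ‖(((n : ℕ) : ℂ) + 1)‖ = (n : ℝ) + 1 := by
          have : (((n : ℕ) : ℂ) + 1) = (((n + 1 : ℕ) : ℕ) : ℂ) := by push_cast; ring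
          rw [this, Complex.norm_natCast]
          push_cast
          ring
        have h2 : ‖y ^ n‖ ≤ r₁ ^ n := by
          rw [norm_pow]
          exact pow_le_pow_left₀ (norm_nonneg _) (le_of_lt (mem_ball_zero_iff.mp hy)) n
        rw [h1]
        calc ((n : ℝ) + 1) * ‖a n‖ * ‖y ^ n‖ ≤ ((n : ℝ) + 1) * ‖a n‖ * r₁ ^ n := by
              gcongr
          _ = ((n : ℝ) + 1) * ‖a n‖ * r₁ ^ n := rfl
      · have : (fun n : ℕ => a n * (0 : ℂ) ^ (n + 1)) = fun _ => 0 := by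
          funext n
          simp
        rw [this]
        exact summable_zero
    have hfG : f =ᶠ[nhds z] fun w : ℂ => ∑' n : ℕ, a n * w ^ (n + 1) := by
      refine Filter.eventuallyEq_of_mem (isOpen_ball.mem_nhds hz) fun w hw => ?_
      have hwR : w ∈ ball (0 : ℂ) R :=
        ball_subset_ball (by linarith : r₁ ≤ R) hw
      exact ((hf w hwR).tsum_eq).symm
    exact (hG.congr_of_eventuallyEq hfG)
  -- notation
  set ι := (Fin k → ℕ) × ℕ × ℕ with hι
  set c : ι → ℂ := fun x =>
    (∏ i, a (x.1 i)) * (starRingEnd ℂ) (a x.2.1) * (((x.2.2 : ℕ) : ℂ) + 1) * a x.2.2 with hc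
  set N : ι → ℤ := fun x =>
    (∑ i, (x.1 i : ℤ)) + k + x.2.2 - (x.2.1 + 1) with hN
  -- per-point expansion on the circle
  have hkey : ∀ z : ℂ, ‖z‖ = 1 →
      HasSum (fun x : ι => c x * z ^ N x)
        (f z ^ k * (starRingEnd ℂ) (f (1 / (starRingEnd ℂ) z)) * deriv f z) := by
    intro z hz
    have hz0 : z ≠ 0 := by
      intro h
      rw [h] at hz
      simp at hz
    have hzinv : (starRingEnd ℂ) z = z⁻¹ := (RCLike.inv_eq_conj hz).symm
    have hinv1 : 1 / (starRingEnd ℂ) z = z := by rw [hzinv, one_div, inv_inv]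
    have hzR : z ∈ ball (0 : ℂ) R := mem_ball_zero_iff.mpr (by rw [hz]; linarith)
    have hz1 : z ∈ ball (0 : ℂ) r₁ := mem_ball_zero_iff.mpr (by rw [hz]; exact h1r₁)
    have hbnorm : Summable fun n : ℕ => ‖a n * z ^ (n + 1)‖ :=
      hA.congr fun n => by rw [norm_mul, norm_pow, hz, one_pow, mul_one]
    have H1 := aux_hasSum_pow hbnorm (hf z hzR) k
    have H2 : HasSum (fun n : ℕ => (starRingEnd ℂ) (a n) * ((starRingEnd ℂ) z) ^ (n + 1))
        ((starRingEnd ℂ) (f (1 / (starRingEnd ℂ) z))) := by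
      rw [hinv1]
      have hmap := (hf z hzR).map (starRingEnd ℂ) RCLike.continuous_conj
      simp only [Function.comp_def, map_mul, map_pow] at hmap
      exact hmap
    have H3 : HasSum (fun m : ℕ => (((m : ℕ) : ℂ) + 1) * a m * z ^ m) (deriv f z) := by
      rw [(hderiv z hz1).deriv]
      refine Summable.hasSum (Summable.of_norm (hA1.congr fun n => ?_))
      rw [norm_mul, norm_mul, norm_pow, hz, one_pow, mul_one, aux_norm_natcast]
    have S1norm : Summable fun j : Fin k → ℕ => ‖∏ i, (a (j i) * z ^ (j i + 1))‖ := by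
      simpa [norm_prod] using H1.2
    have S2norm : Summable fun n : ℕ =>
        ‖(starRingEnd ℂ) (a n) * ((starRingEnd ℂ) z) ^ (n + 1)‖ :=
      hA.congr fun n => by
        rw [norm_mul, norm_pow, RCLike.norm_conj, RCLike.norm_conj, hz, one_pow, mul_one]
    have S3norm : Summable fun m : ℕ => ‖(((m : ℕ) : ℂ) + 1) * a m * z ^ m‖ :=
      hA1.congr fun n => by
        rw [norm_mul, norm_mul, norm_pow, hz, one_pow, mul_one, aux_norm_natcast]
    have H23 : HasSum (fun p : ℕ × ℕ =>
        ((starRingEnd ℂ) (a p.1) * ((starRingEnd ℂ) z) ^ (p.1 + 1)) *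
          ((((p.2 : ℕ) : ℂ) + 1) * a p.2 * z ^ p.2))
        ((starRingEnd ℂ) (f (1 / (starRingEnd ℂ) z)) * deriv f z) :=
      HasSum.mul
        (f := fun n : ℕ => (starRingEnd ℂ) (a n) * ((starRingEnd ℂ) z) ^ (n + 1))
        (g := fun m : ℕ => (((m : ℕ) : ℂ) + 1) * a m * z ^ m) H2 H3
        (summable_mul_of_summable_norm
          (f := fun n : ℕ => (starRingEnd ℂ) (a n) * ((starRingEnd ℂ) z) ^ (n + 1))
          (g := fun m : ℕ => (((m : ℕ) : ℂ) + 1) * a m * z ^ m) S2norm S3norm)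
    have S23norm : Summable fun p : ℕ × ℕ =>
        ‖((starRingEnd ℂ) (a p.1) * ((starRingEnd ℂ) z) ^ (p.1 + 1)) *
          ((((p.2 : ℕ) : ℂ) + 1) * a p.2 * z ^ p.2)‖ :=
      Summable.mul_norm
        (f := fun n : ℕ => (starRingEnd ℂ) (a n) * ((starRingEnd ℂ) z) ^ (n + 1))
        (g := fun m : ℕ => (((m : ℕ) : ℂ) + 1) * a m * z ^ m) S2norm S3norm
    have Hall : HasSum (fun x : (Fin k → ℕ) × ℕ × ℕ =>
        (∏ i, (a (x.1 i) * z ^ (x.1 i + 1))) *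
          (((starRingEnd ℂ) (a x.2.1) * ((starRingEnd ℂ) z) ^ (x.2.1 + 1)) *
            ((((x.2.2 : ℕ) : ℂ) + 1) * a x.2.2 * z ^ x.2.2)))
        (f z ^ k * ((starRingEnd ℂ) (f (1 / (starRingEnd ℂ) z)) * deriv f z)) :=
      HasSum.mul
        (f := fun j : Fin k → ℕ => ∏ i, (a (j i) * z ^ (j i + 1)))
        (g := fun p : ℕ × ℕ =>
          ((starRingEnd ℂ) (a p.1) * ((starRingEnd ℂ) z) ^ (p.1 + 1)) *
            ((((p.2 : ℕ) : ℂ) + 1) * a p.2 * z ^ p.2)) H1.1 H23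
        (summable_mul_of_summable_norm
          (f := fun j : Fin k → ℕ => ∏ i, (a (j i) * z ^ (j i + 1)))
          (g := fun p : ℕ × ℕ =>
            ((starRingEnd ℂ) (a p.1) * ((starRingEnd ℂ) z) ^ (p.1 + 1)) *
              ((((p.2 : ℕ) : ℂ) + 1) * a p.2 * z ^ p.2)) S1norm S23norm)
    have hfeq : (fun x : ι => c x * z ^ N x) = fun x : (Fin k → ℕ) × ℕ × ℕ =>
        (∏ i, (a (x.1 i) * z ^ (x.1 i + 1))) *
          (((starRingEnd ℂ) (a x.2.1) * ((starRingEnd ℂ) z) ^ (x.2.1 + 1)) *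
            ((((x.2.2 : ℕ) : ℂ) + 1) * a x.2.2 * z ^ x.2.2)) := by
      funext x
      obtain ⟨j, n, m⟩ := x
      have hprod : ∏ i, (a (j i) * z ^ (j i + 1)) =
          (∏ i, a (j i)) * z ^ ((∑ i, j i) + k) := by
        rw [Finset.prod_mul_distrib, Finset.prod_pow_eq_pow_sum]
        congr 2
        rw [Finset.sum_add_distrib, Finset.sum_const, Finset.card_univ, Fintype.card_fin,
          smul_eq_mul, mul_one]
      have hNx : N (j, n, m) = (((∑ i, j i) + k : ℕ) : ℤ) + (m : ℤ) - ((n + 1 : ℕ) : ℤ) := by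
        rw [hN]
        push_cast
        ring
      have hzpow : z ^ N (j, n, m) = z ^ ((∑ i, j i) + k) * ((z ^ (n + 1))⁻¹ * z ^ m) := by
        rw [hNx, zpow_sub₀ hz0, zpow_add₀ hz0, zpow_natCast, zpow_natCast, zpow_natCast]
        ring
      rw [hprod, hzpow, hzinv, inv_pow, hc]
      ring
    rw [← hfeq, ← mul_assoc] at Hall
    exact Hall
  -- summability of coefficients
  have hcsummable : Summable fun x : ι => ‖c x‖ := by
    have hPa : Summable fun j : Fin k → ℕ => ∏ i, ‖a (j i)‖ :=
      (aux_hasSum_pow hA (hA.of_norm.hasSum) k).2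
    have hpair : Summable fun p : ℕ × ℕ => ‖a p.1‖ * (((p.2 : ℝ) + 1) * ‖a p.2‖) :=
      Summable.mul_of_nonneg (f := fun n : ℕ => ‖a n‖)
        (g := fun m : ℕ => ((m : ℝ) + 1) * ‖a m‖) hA hA1
        (fun n => norm_nonneg _) (fun m => by positivity)
    have hT : Summable fun x : (Fin k → ℕ) × ℕ × ℕ =>
        (∏ i, ‖a (x.1 i)‖) * (‖a x.2.1‖ * (((x.2.2 : ℝ) + 1) * ‖a x.2.2‖)) :=
      Summable.mul_of_nonneg (f := fun j : Fin k → ℕ => ∏ i, ‖a (j i)‖)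
        (g := fun p : ℕ × ℕ => ‖a p.1‖ * (((p.2 : ℝ) + 1) * ‖a p.2‖)) hPa hpair
        (fun j => Finset.prod_nonneg fun i _ => norm_nonneg _)
        (fun p => by positivity)
    refine Summable.of_nonneg_of_le (fun x => norm_nonneg _) (fun x => ?_) hT
    refine le_of_eq ?_
    calc ‖c x‖ = (∏ i, ‖a (x.1 i)‖) * ‖a x.2.1‖ * ((x.2.2 : ℝ) + 1) * ‖a x.2.2‖ := by
          simp only [hc]
          rw [norm_mul, norm_mul, norm_mul, norm_prod, RCLike.norm_conj, aux_norm_natcast]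
      _ = (∏ i, ‖a (x.1 i)‖) * (‖a x.2.1‖ * (((x.2.2 : ℝ) + 1) * ‖a x.2.2‖)) := by ring
  -- integral swap
  have h2pi : (0 : ℝ) ≤ 2 * π := by positivity
  set F : ι → ℝ → ℂ := fun x θ =>
    deriv (circleMap 0 1) θ • (c x * circleMap 0 1 θ ^ N x) with hF
  have habs : ∀ θ : ℝ, ‖circleMap 0 1 θ‖ = 1 := by
    intro θ
    rw [norm_circleMap_zero]
    norm_num
  have hne : ∀ θ : ℝ, circleMap 0 1 θ ≠ 0 := fun θ => circleMap_ne_center one_ne_zero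
  have hInt : ∀ x : ι, Integrable (F x) (volume.restrict (Set.Ioc 0 (2 * π))) := by
    intro x
    have hcont : Continuous (F x) := by
      simp only [hF]
      have h1 : Continuous fun θ : ℝ => deriv (circleMap 0 1) θ := by
        simp only [deriv_circleMap]
        exact (continuous_circleMap 0 1).mul continuous_const
      have h2 : Continuous fun θ : ℝ => circleMap 0 1 θ ^ N x :=
        (continuous_circleMap 0 1).zpow₀ (N x) (fun θ => Or.inl (hne θ))
      exact h1.smul (continuous_const.mul h2)
    exact hcont.integrableOn_Ioc
  have hnormF : ∀ (x : ι) (θ : ℝ), ‖F x θ‖ = ‖c x‖ := by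
    intro x θ
    simp only [hF, smul_eq_mul]
    rw [norm_mul, norm_mul, norm_zpow, deriv_circleMap, norm_mul, habs θ, Complex.norm_I,
      one_zpow]
    ring
  have hsumint : Summable fun x : ι => ∫ θ in Set.Ioc 0 (2 * π), ‖F x θ‖ := by
    have : (fun x : ι => ∫ θ in Set.Ioc 0 (2 * π), ‖F x θ‖) =
        fun x : ι => (2 * π) * ‖c x‖ := by
      funext x
      simp only [hnormF]
      rw [setIntegral_const, Real.volume_real_Ioc_of_le h2pi, smul_eq_mul]
      norm_num [ENNReal.toReal_ofReal h2pi]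
    rw [this]
    exact hcsummable.mul_left _
  have hswap := hasSum_integral_of_summable_integral_norm
    (μ := volume.restrict (Set.Ioc 0 (2 * π))) hInt hsumint
  have hptsum : ∀ θ : ℝ, ∑' x : ι, F x θ =
      deriv (circleMap 0 1) θ • (f (circleMap 0 1 θ) ^ k *
        (starRingEnd ℂ) (f (1 / (starRingEnd ℂ) (circleMap 0 1 θ))) *
        deriv f (circleMap 0 1 θ)) := by
    intro θ
    have h := (hkey (circleMap 0 1 θ) (habs θ)).mul_left (deriv (circleMap 0 1) θ)
    rw [smul_eq_mul, ← h.tsum_eq]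
    exact tsum_congr fun x => by rw [hF]; simp [smul_eq_mul]
  have hmain : (∮ ζ in C(0, 1),
        f ζ ^ k * (starRingEnd ℂ) (f (1 / (starRingEnd ℂ) ζ)) * deriv f ζ) =
      ∑' x : ι, ∮ ζ in C(0, 1), c x * ζ ^ N x := by
    have hcirc : ∀ x : ι, (∮ ζ in C(0, 1), c x * ζ ^ N x) =
        ∫ θ in Set.Ioc 0 (2 * π), F x θ := by
      intro x
      rw [circleIntegral, intervalIntegral.integral_of_le h2pi]
    rw [circleIntegral, intervalIntegral.integral_of_le h2pi]
    have h1 : (fun θ : ℝ => deriv (circleMap 0 1) θ •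
        (f (circleMap 0 1 θ) ^ k *
          (starRingEnd ℂ) (f (1 / (starRingEnd ℂ) (circleMap 0 1 θ))) *
          deriv f (circleMap 0 1 θ))) = fun θ : ℝ => ∑' x : ι, F x θ :=
      funext fun θ => (hptsum θ).symm
    rw [h1, ← hswap.tsum_eq]
    exact tsum_congr fun x => (hcirc x).symm
  -- evaluate each integral
  have heval : ∀ x : ι, ((2 * ↑π * Complex.I)⁻¹ * ∮ ζ in C(0, 1), c x * ζ ^ N x) =
      if N x = -1 then c x else 0 := by
    intro x
    rw [circleIntegral.integral_const_mul]
    by_cases hx : N x = -1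
    · have h1 : (∮ ζ in C(0, 1), ζ ^ (-1 : ℤ)) = 2 * ↑π * Complex.I := by
        have h2 := circleIntegral.integral_sub_inv_of_mem_ball
          (c := (0 : ℂ)) (w := 0) (R := 1) (by simp)
        have h3 : (fun ζ : ℂ => ζ ^ (-1 : ℤ)) = fun ζ : ℂ => (ζ - 0)⁻¹ := by
          funext ζ
          rw [zpow_neg, zpow_one, sub_zero]
        rw [h3]
        exact h2
      rw [hx, h1, if_pos rfl]
      have h4 : (2 * (π : ℂ) * Complex.I) ≠ 0 := Complex.two_pi_I_ne_zero
      field_simp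
    · have h1 : (∮ ζ in C(0, 1), ζ ^ N x) = 0 := by
        have h2 := circleIntegral.integral_sub_zpow_of_ne hx 0 0 1
        have h3 : (fun ζ : ℂ => ζ ^ N x) = fun ζ : ℂ => (ζ - 0) ^ N x := by
          funext ζ
          rw [sub_zero]
        rw [h3]
        exact h2
      rw [h1, mul_zero, mul_zero, if_neg hx]
  -- final combinatorial identity
  have hfinal : (∑' x : ι, if N x = -1 then c x else 0) =
      ∑' j : Fin (k + 1) → ℕ,
        (((j 0 : ℕ) : ℂ) + 1) * (∏ i, a (j i)) * (starRingEnd ℂ) (a ((∑ i, j i) + k)) := by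
    set g : ℕ × (Fin k → ℕ) → ℂ := fun p =>
      (((p.1 : ℕ) : ℂ) + 1) * (a p.1 * ∏ i, a (p.2 i)) *
        (starRingEnd ℂ) (a (p.1 + ∑ i, p.2 i + k)) with hg
    have h1 : ∑' p : ℕ × (Fin k → ℕ), g p =
        ∑' j : Fin (k + 1) → ℕ,
          (((j 0 : ℕ) : ℂ) + 1) * (∏ i, a (j i)) * (starRingEnd ℂ) (a ((∑ i, j i) + k)) := by
      rw [← (Fin.consEquiv fun _ : Fin (k + 1) => ℕ).tsum_eq
        (f := fun j : Fin (k + 1) → ℕ =>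
          (((j 0 : ℕ) : ℂ) + 1) * (∏ i, a (j i)) * (starRingEnd ℂ) (a ((∑ i, j i) + k)))]
      refine tsum_congr fun p => ?_
      have e0 : ((Fin.consEquiv fun _ : Fin (k + 1) => ℕ) p) 0 = p.1 := by
        simp [Fin.consEquiv]
      have eP : ∏ i, a (((Fin.consEquiv fun _ : Fin (k + 1) => ℕ) p) i) =
          a p.1 * ∏ i, a (p.2 i) := by
        simp [Fin.consEquiv, Fin.prod_univ_succ]
      have eS : ∑ i, ((Fin.consEquiv fun _ : Fin (k + 1) => ℕ) p) i = p.1 + ∑ i, p.2 i := by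
        simp [Fin.consEquiv, Fin.sum_univ_succ]
      simp only [hg]
      rw [e0, eP, eS, add_assoc]
    rw [← h1]
    refine tsum_eq_tsum_of_ne_zero_bij
      (i := fun q => (q.1.2, ((∑ i, q.1.2 i) + k + q.1.1, q.1.1))) ?_ ?_ ?_
    · intro q q' hqq
      have h2 : q.1.2 = q'.1.2 := congrArg Prod.fst hqq
      have h3 : q.1.1 = q'.1.1 := congrArg (fun y => y.2.2) hqq
      exact Subtype.ext (Prod.ext h3 h2)
    · rintro ⟨j, n, m⟩ hx
      have hNx : N (j, n, m) = -1 := by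
        by_contra hne'
        simp only [Function.mem_support] at hx
        rw [if_neg hne'] at hx
        exact hx rfl
      have hcx : c (j, n, m) ≠ 0 := by
        simp only [Function.mem_support] at hx
        rwa [if_pos hNx] at hx
      have hn : n = (∑ i, j i) + k + m := by
        simp only [hN] at hNx
        rw [← Nat.cast_sum] at hNx
        omega
      have hgval : g (m, j) = c (j, n, m) := by
        simp only [hg, hc, hn]
        rw [show m + ∑ i, j i + k = (∑ i, j i) + k + m by omega]
        ring
      refine ⟨⟨(m, j), ?_⟩, ?_⟩
      · simp only [Function.mem_support, hgval]
        exact hcx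
      · simp only
        rw [← hn]
    · rintro ⟨⟨m, j⟩, hq⟩
      have hNq : N (j, ((∑ i, j i) + k + m, m)) = -1 := by
        simp only [hN]
        push_cast
        ring
      rw [if_pos hNq]
      simp only [hc, hg]
      rw [show m + ∑ i, j i + k = (∑ i, j i) + k + m by omega]
      ring
  calc ((2 * ↑π * Complex.I)⁻¹ *
        ∮ ζ in C(0, 1), f ζ ^ k * (starRingEnd ℂ) (f (1 / (starRingEnd ℂ) ζ)) * deriv f ζ)
      = (2 * ↑π * Complex.I)⁻¹ * ∑' x : ι, (∮ ζ in C(0, 1), c x * ζ ^ N x) := by rw [hmain]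
    _ = ∑' x : ι, ((2 * ↑π * Complex.I)⁻¹ * ∮ ζ in C(0, 1), c x * ζ ^ N x) := by
        rw [tsum_mul_left]
    _ = ∑' x : ι, (if N x = -1 then c x else 0) := tsum_congr heval
    _ = _ := hfinal
end

section
/- Let f(ζ) = c ζ(ζ−a)/(ζ−b) with 0 < |a| < 1 < |b|, c ≠ 0, and let h be analytic in a neighborhood of the closure of f(D). Then (1/(2πi)) ∮_{∂D} h(f(ζ)) f*(ζ) f'(ζ) dζ = A h(f(0)) + B h(f(1/b̄)), where A = |c|² a/b and B = |c|² (ā−b̄)(1 − 2|b|² + a b̄ |b|²) / (b̄ (1−|b|²)²). -/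
open Complex Metric
open scoped Real

private lemma circleIntegral_add' {f g : ℂ → ℂ} {c : ℂ} {R : ℝ}
    (hf : CircleIntegrable f c R) (hg : CircleIntegrable g c R) :
    (∮ z in C(c, R), (f z + g z)) = (∮ z in C(c, R), f z) + ∮ z in C(c, R), g z := by
  simp only [circleIntegral, smul_add]
  exact intervalIntegral.integral_add ((circleIntegrable_iff R).mp hf)
    ((circleIntegrable_iff R).mp hg)

set_option maxHeartbeats 1000000 in
private lemma key_frac (a b c a' b' c' ζ A B n1 n0 : ℂ)
    (hζ0 : ζ ≠ 0) (hζb : ζ - b ≠ 0) (hb0 : b ≠ 0) (hb'0 : b' ≠ 0)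
    (hbb : 1 - b * b' ≠ 0)
    (h3 : 1 - b' * ζ ≠ 0) (h5 : b' * ζ - 1 ≠ 0)
    (hA : A = c * c' * a / b)
    (hB : B = c * c' * ((a' - b') * (1 - 2 * (b * b') + a * b' * (b * b'))) / (b' * (1 - b * b') ^ 2))
    (hn1 : n1 = c * c' * a' / b' - A - B)
    (hn0 : n0 = c * c' * (1 - a' * b) * (a - b) / (1 - b * b') - n1 * b) :
    (c' * ζ⁻¹ * (ζ⁻¹ - a') / (ζ⁻¹ - b')) *
      (((c * (ζ - a) + c * ζ) * (ζ - b) - c * ζ * (ζ - a)) / (ζ - b) ^ 2)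
    = (n1 * ζ + n0) / (ζ - b) ^ 2 + (ζ - 0)⁻¹ * A + (ζ - b'⁻¹)⁻¹ * B := by
  set K : ℂ := b * b' * (1 - b * b') ^ 2 with hK
  have hKne : K ≠ 0 := mul_ne_zero (mul_ne_zero hb0 hb'0) (pow_ne_zero 2 hbb)
  have hA' : A * K = c * c' * a * b' * (1 - b * b') ^ 2 := by
    rw [hA, hK]; field_simp
  have hB' : B * K = c * c' * ((a' - b') * (1 - 2 * (b * b') + a * b' * (b * b'))) * b := by
    rw [hB, hK, div_mul_eq_mul_div, div_eq_iff (mul_ne_zero hb'0 (pow_ne_zero 2 hbb))]; ring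
  have hn1' : n1 * K = c * c' * a' * b * (1 - b * b') ^ 2 - A * K - B * K := by
    rw [hn1, hK]; field_simp
  have hn0' : n0 * K = c * c' * (1 - a' * b) * (a - b) * b * b' * (1 - b * b') - n1 * K * b := by
    rw [hn0, hK]; field_simp
  have e2 : ζ⁻¹ - b' = (1 - b' * ζ) / ζ := by field_simp
  have h2ne : ζ⁻¹ - b' ≠ 0 := by rw [e2]; exact div_ne_zero h3 hζ0
  have hden : ζ * (1 - b' * ζ) ≠ 0 := mul_ne_zero hζ0 h3
  have hX : c' * ζ⁻¹ * (ζ⁻¹ - a') / (ζ⁻¹ - b') = c' * (1 - a' * ζ) / (ζ * (1 - b' * ζ)) := by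
    rw [div_eq_div_iff h2ne hden]
    field_simp
  have hW : (ζ - b'⁻¹)⁻¹ = b' / (b' * ζ - 1) := by
    have h4 : ζ - b'⁻¹ = (b' * ζ - 1) / b' := by field_simp
    rw [h4, inv_div]
  rw [hX, hW, sub_zero, div_mul_div_comm]
  rw [inv_mul_eq_div ζ A, div_mul_eq_mul_div b' (b' * ζ - 1) B]
  rw [div_add_div _ _ (pow_ne_zero 2 hζb) hζ0]
  rw [div_add_div _ _ (mul_ne_zero (pow_ne_zero 2 hζb) hζ0) h5]
  rw [div_eq_div_iff (mul_ne_zero (mul_ne_zero hζ0 h3) (pow_ne_zero 2 hζb))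
    (mul_ne_zero (mul_ne_zero (pow_ne_zero 2 hζb) hζ0) h5)]
  refine mul_left_cancel₀ hKne ?_
  linear_combination (b * (ζ * (1 - b' * ζ) * (ζ - b) ^ 2) * (ζ - b) * (b' * ζ - 1)) * hA' +
    ((ζ * (1 - b' * ζ) * (ζ - b) ^ 2) * ζ * (b' * ζ - 1) * (ζ - b) -
      (ζ * (1 - b' * ζ) * (ζ - b) ^ 2) * b' * (ζ - b) ^ 2 * ζ) * hB' +
    (-((ζ * (1 - b' * ζ) * (ζ - b) ^ 2) * ζ * (b' * ζ - 1) * (ζ - b))) * hn1' +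
    (-((ζ * (1 - b' * ζ) * (ζ - b) ^ 2) * ζ * (b' * ζ - 1))) * hn0'

/-- for `f(ζ) = cζ(ζ−a)/(ζ−b)` with `0<|a|<1<|b|`, `c ≠ 0`, and `h`
analytic in a neighborhood of the closure of `f(D)`,
`(1/(2πi)) ∮_{∂D} h(f(ζ)) f*(ζ) f'(ζ) dζ = A h(f(0)) + B h(f(1/b̄))` with
`A = |c|² a/b` and `B = |c|² (ā−b̄)(1−2|b|²+ab̄|b|²)/(b̄(1−|b|²)²)`. -/
theorem stmt_6 (a b c : ℂ) (ha : 0 < ‖a‖) (ha1 : ‖a‖ < 1)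
    (hb : 1 < ‖b‖) (hc : c ≠ 0)
    (f : ℂ → ℂ) (hf : f = fun ζ => c * ζ * (ζ - a) / (ζ - b))
    (h : ℂ → ℂ) (hh : AnalyticOnNhd ℂ h (closure (f '' ball 0 1))) :
    ((2 * π * Complex.I)⁻¹ *
        ∮ ζ in C(0, 1), h (f ζ) * (starRingEnd ℂ) (f (1 / (starRingEnd ℂ) ζ)) * deriv f ζ) =
      ((‖c‖ : ℂ) ^ 2 * a / b) * h (f 0) +
        ((‖c‖ : ℂ) ^ 2 *
            (((starRingEnd ℂ) a - (starRingEnd ℂ) b) *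
              (1 - 2 * (‖b‖ : ℂ) ^ 2 + a * (starRingEnd ℂ) b * (‖b‖ : ℂ) ^ 2)) /
            ((starRingEnd ℂ) b * (1 - (‖b‖ : ℂ) ^ 2) ^ 2)) *
          h (f (1 / (starRingEnd ℂ) b)) := by
  have hb0 : b ≠ 0 := by
    intro h0
    rw [h0] at hb
    simp at hb
    linarith
  have hb'0 : (starRingEnd ℂ) b ≠ 0 := by simpa using hb0
  have hc2 : ((‖c‖ : ℝ) : ℂ) ^ 2 = c * (starRingEnd ℂ) c := by
    rw [← Complex.ofReal_pow, Complex.sq_norm, Complex.mul_conj]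
  have hb2 : ((‖b‖ : ℝ) : ℂ) ^ 2 = b * (starRingEnd ℂ) b := by
    rw [← Complex.ofReal_pow, Complex.sq_norm, Complex.mul_conj]
  rw [hc2, hb2]
  set A : ℂ := c * (starRingEnd ℂ) c * a / b with hA
  set B : ℂ := c * (starRingEnd ℂ) c *
      (((starRingEnd ℂ) a - (starRingEnd ℂ) b) *
        (1 - 2 * (b * (starRingEnd ℂ) b) + a * (starRingEnd ℂ) b * (b * (starRingEnd ℂ) b))) /
      ((starRingEnd ℂ) b * (1 - b * (starRingEnd ℂ) b) ^ 2) with hB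
  set n1 : ℂ := c * (starRingEnd ℂ) c * (starRingEnd ℂ) a / (starRingEnd ℂ) b - A - B with hn1
  set n0 : ℂ := c * (starRingEnd ℂ) c * (1 - (starRingEnd ℂ) a * b) * (a - b) /
      (1 - b * (starRingEnd ℂ) b) - n1 * b with hn0
  -- basic nonvanishing facts
  have hbb : (1 : ℂ) - b * (starRingEnd ℂ) b ≠ 0 := by
    rw [Complex.mul_conj, ← Complex.ofReal_one, ← Complex.ofReal_sub, Complex.ofReal_ne_zero]
    have : 1 < Complex.normSq b := by
      rw [← Complex.sq_norm]; nlinarith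
    linarith
  -- b is outside the closed ball
  have hζb : ∀ ζ ∈ closedBall (0 : ℂ) 1, ζ - b ≠ 0 := by
    intro ζ hζ
    have h1 : ‖ζ‖ ≤ 1 := mem_closedBall_zero_iff.mp hζ
    rw [sub_ne_zero]
    intro hEq
    rw [hEq] at h1
    linarith
  -- f is differentiable on the closed ball
  have hfd : ∀ ζ ∈ closedBall (0 : ℂ) 1, DifferentiableAt ℂ f ζ := by
    intro ζ hζ
    rw [hf]
    exact DifferentiableAt.div (by fun_prop) (by fun_prop) (hζb ζ hζ)
  -- h ∘ f is differentiable on the closed ball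
  have hhf : ∀ ζ ∈ closedBall (0 : ℂ) 1, DifferentiableAt ℂ (fun z => h (f z)) ζ := by
    intro ζ hζ
    have hmem : f ζ ∈ closure (f '' ball 0 1) := by
      have hcl : ContinuousOn f (closure (ball (0 : ℂ) 1)) := by
        rw [closure_ball (0 : ℂ) one_ne_zero]
        exact fun z hz => (hfd z hz).continuousAt.continuousWithinAt
      exact hcl.image_closure
        (Set.mem_image_of_mem f (by rwa [closure_ball (0 : ℂ) one_ne_zero]))
    exact DifferentiableAt.comp ζ ((hh (f ζ) hmem).differentiableAt) (hfd ζ hζ)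
  have hwmem : 1 / (starRingEnd ℂ) b ∈ ball (0 : ℂ) 1 := by
    rw [one_div, mem_ball_zero_iff, norm_inv, Complex.norm_conj]
    exact inv_lt_one_of_one_lt₀ hb
  -- pointwise identity on the circle
  have hEqOn : ∀ ζ ∈ sphere (0 : ℂ) 1,
      h (f ζ) * (starRingEnd ℂ) (f (1 / (starRingEnd ℂ) ζ)) * deriv f ζ =
      (n1 * ζ + n0) / (ζ - b) ^ 2 * h (f ζ) +
        ((ζ - 0)⁻¹ • (A * h (f ζ)) + (ζ - 1 / (starRingEnd ℂ) b)⁻¹ • (B * h (f ζ))) := by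
    intro ζ hζ
    have hζ1 : ‖ζ‖ = 1 := mem_sphere_zero_iff_norm.mp hζ
    have hζ0 : ζ ≠ 0 := by
      intro h0; rw [h0] at hζ1; simp at hζ1
    have hζcb : ζ ∈ closedBall (0 : ℂ) 1 := sphere_subset_closedBall hζ
    have hζbne : ζ - b ≠ 0 := hζb ζ hζcb
    have hconj : (starRingEnd ℂ) ζ = ζ⁻¹ := by
      field_simp
      rw [mul_comm, Complex.mul_conj]
      norm_cast
      rw [← Complex.sq_norm, hζ1]; norm_num
    have harg : 1 / (starRingEnd ℂ) ζ = ζ := by rw [one_div, hconj, inv_inv]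
    have hstar : (starRingEnd ℂ) (f (1 / (starRingEnd ℂ) ζ)) =
        (starRingEnd ℂ) c * ζ⁻¹ * (ζ⁻¹ - (starRingEnd ℂ) a) / (ζ⁻¹ - (starRingEnd ℂ) b) := by
      rw [harg, hf]
      simp only [map_div₀, map_mul, map_sub, hconj]
    have hderiv : deriv f ζ =
        ((c * (ζ - a) + c * ζ) * (ζ - b) - c * ζ * (ζ - a)) / (ζ - b) ^ 2 := by
      have h1 : HasDerivAt (fun z : ℂ => c * z) c ζ := by
        simpa using (hasDerivAt_id ζ).const_mul c
      have h2 : HasDerivAt (fun z : ℂ => z - a) 1 ζ := (hasDerivAt_id ζ).sub_const a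
      have hv : HasDerivAt (fun z : ℂ => z - b) 1 ζ := (hasDerivAt_id ζ).sub_const b
      have hq := (h1.mul h2).div hv hζbne
      rw [hf, show (fun ζ : ℂ => c * ζ * (ζ - a) / (ζ - b)) =
        ((fun z : ℂ => c * z) * fun z => z - a) / fun z => z - b from rfl, hq.deriv]
      simp only [Pi.mul_apply]
      ring
    have h3 : 1 - (starRingEnd ℂ) b * ζ ≠ 0 := by
      intro hEq
      have : (starRingEnd ℂ) b * ζ = 1 := by linear_combination -hEq
      have habs := congrArg norm this
      rw [norm_mul, Complex.norm_conj, hζ1, mul_one, norm_one] at habs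
      linarith
    have h5 : (starRingEnd ℂ) b * ζ - 1 ≠ 0 := by
      intro hEq
      apply h3
      linear_combination -hEq
    have key := key_frac a b c ((starRingEnd ℂ) a) ((starRingEnd ℂ) b) ((starRingEnd ℂ) c) ζ
      A B n1 n0 hζ0 hζbne hb0 hb'0 hbb h3 h5 hA hB hn1 hn0
    rw [hstar, hderiv, one_div, smul_eq_mul, smul_eq_mul]
    linear_combination h (f ζ) * key
  -- continuity/integrability of the pieces
  have hcont_hf : ContinuousOn (fun ζ => h (f ζ)) (sphere (0 : ℂ) 1) := fun ζ hζ =>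
    ((hhf ζ (sphere_subset_closedBall hζ)).continuousAt).continuousWithinAt
  have int1 : CircleIntegrable (fun ζ => (n1 * ζ + n0) / (ζ - b) ^ 2 * h (f ζ)) 0 1 := by
    apply ContinuousOn.circleIntegrable zero_le_one
    exact (ContinuousOn.div (by fun_prop) (by fun_prop)
      (fun ζ hζ => pow_ne_zero 2 (hζb ζ (sphere_subset_closedBall hζ)))).mul hcont_hf
  have int2 : CircleIntegrable (fun ζ => (ζ - 0)⁻¹ • (A * h (f ζ))) 0 1 := by
    apply ContinuousOn.circleIntegrable zero_le_one
    refine ContinuousOn.smul (ContinuousOn.inv₀ (f := fun ζ : ℂ => ζ - 0) (by fun_prop) ?_)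
      (continuousOn_const.mul hcont_hf)
    intro ζ hζ
    rw [sub_zero]
    intro h0
    rw [h0] at hζ
    simp [mem_sphere_zero_iff_norm] at hζ
  have int3 : CircleIntegrable (fun ζ => (ζ - 1 / (starRingEnd ℂ) b)⁻¹ • (B * h (f ζ))) 0 1 := by
    apply ContinuousOn.circleIntegrable zero_le_one
    refine ContinuousOn.smul
      (ContinuousOn.inv₀ (f := fun ζ : ℂ => ζ - 1 / (starRingEnd ℂ) b) (by fun_prop) ?_)
      (continuousOn_const.mul hcont_hf)
    intro ζ hζ
    rw [sub_ne_zero]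
    intro h0
    have h1 : ‖ζ‖ = 1 := mem_sphere_zero_iff_norm.mp hζ
    have h2 : ‖(1 / (starRingEnd ℂ) b : ℂ)‖ < 1 := mem_ball_zero_iff.mp hwmem
    rw [← h0, h1] at h2
    linarith
  -- the three integrals
  have hg1 : (∮ ζ in C(0, 1), (n1 * ζ + n0) / (ζ - b) ^ 2 * h (f ζ)) = 0 := by
    have hdiff : ∀ z ∈ closedBall (0 : ℂ) 1,
        DifferentiableAt ℂ (fun ζ => (n1 * ζ + n0) / (ζ - b) ^ 2 * h (f ζ)) z := by
      intro z hz
      have hrat : DifferentiableAt ℂ (fun ζ : ℂ => (n1 * ζ + n0) / (ζ - b) ^ 2) z :=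
        DifferentiableAt.div (by fun_prop) (by fun_prop) (pow_ne_zero 2 (hζb z hz))
      exact hrat.mul (hhf z hz)
    exact Complex.circleIntegral_eq_zero_of_differentiable_on_off_countable zero_le_one
      Set.countable_empty (fun z hz => (hdiff z hz).continuousAt.continuousWithinAt)
      (fun z hz => hdiff z (ball_subset_closedBall hz.1))
  have hDC : ∀ (d : ℂ), DiffContOnCl ℂ (fun ζ => d * h (f ζ)) (ball (0 : ℂ) 1) := by
    intro d
    refine ⟨fun z hz => ((hhf z (ball_subset_closedBall hz)).const_mul d).differentiableWithinAt,
      ?_⟩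
    rw [closure_ball (0 : ℂ) one_ne_zero]
    exact fun z hz => ((hhf z hz).const_mul d).continuousAt.continuousWithinAt
  have hg2 : (∮ ζ in C(0, 1), (ζ - 0)⁻¹ • (A * h (f ζ))) =
      (2 * π * Complex.I : ℂ) • (A * h (f 0)) :=
    (hDC A).circleIntegral_sub_inv_smul (mem_ball_self one_pos)
  have hg3 : (∮ ζ in C(0, 1), (ζ - 1 / (starRingEnd ℂ) b)⁻¹ • (B * h (f ζ))) =
      (2 * π * Complex.I : ℂ) • (B * h (f (1 / (starRingEnd ℂ) b))) :=
    (hDC B).circleIntegral_sub_inv_smul hwmem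
  -- assemble
  have hsplit : (∮ ζ in C(0, 1),
      h (f ζ) * (starRingEnd ℂ) (f (1 / (starRingEnd ℂ) ζ)) * deriv f ζ) =
      (∮ ζ in C(0, 1), (n1 * ζ + n0) / (ζ - b) ^ 2 * h (f ζ)) +
        ((∮ ζ in C(0, 1), (ζ - 0)⁻¹ • (A * h (f ζ))) +
          ∮ ζ in C(0, 1), (ζ - 1 / (starRingEnd ℂ) b)⁻¹ • (B * h (f ζ))) := by
    calc (∮ ζ in C(0, 1), h (f ζ) * (starRingEnd ℂ) (f (1 / (starRingEnd ℂ) ζ)) * deriv f ζ)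
        = ∮ ζ in C(0, 1), ((n1 * ζ + n0) / (ζ - b) ^ 2 * h (f ζ) +
            ((ζ - 0)⁻¹ • (A * h (f ζ)) + (ζ - 1 / (starRingEnd ℂ) b)⁻¹ • (B * h (f ζ)))) :=
          circleIntegral.integral_congr zero_le_one hEqOn
      _ = (∮ ζ in C(0, 1), (n1 * ζ + n0) / (ζ - b) ^ 2 * h (f ζ)) +
            ∮ ζ in C(0, 1), ((ζ - 0)⁻¹ • (A * h (f ζ)) +
              (ζ - 1 / (starRingEnd ℂ) b)⁻¹ • (B * h (f ζ))) :=
          circleIntegral_add' int1 (int2.add int3)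
      _ = (∮ ζ in C(0, 1), (n1 * ζ + n0) / (ζ - b) ^ 2 * h (f ζ)) +
            ((∮ ζ in C(0, 1), (ζ - 0)⁻¹ • (A * h (f ζ))) +
              ∮ ζ in C(0, 1), (ζ - 1 / (starRingEnd ℂ) b)⁻¹ • (B * h (f ζ))) :=
          congrArg (fun t => (∮ ζ in C(0, 1), (n1 * ζ + n0) / (ζ - b) ^ 2 * h (f ζ)) + t)
            (circleIntegral_add' int2 int3)
  rw [hsplit, hg1, hg2, hg3, zero_add, smul_eq_mul, smul_eq_mul]
  have h2pi : (2 * (π : ℂ) * Complex.I) ≠ 0 := by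
    simp [Real.pi_ne_zero, Complex.I_ne_zero]
  field_simp
end

section
/- Let f(ζ) = c ζ(ζ−a)/(ζ−b) with 0 < |a| < 1 < |b|, c ≠ 0, and suppose a = 1/b̄. Then f(1/b̄) = 0 = f(0), the two quadrature weights are equal: A = B = |c|²/|b|², and the moments satisfy M_0 = 2|c|²/|b|² and M_k = 0 for all k ≥ 1, where M_k = (1/(2πi)) ∮_{∂D} f(ζ)^k f*(ζ) f'(ζ) dζ. -/
open Complex Metric
open scoped Real
set_option maxHeartbeats 1000000

lemma cauchy_two (H : ℂ → ℂ) (a : ℂ) (ha : ‖a‖ < 1)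
    (hH : DifferentiableOn ℂ H (closedBall 0 1)) :
    (∮ ζ in C(0, 1), ((ζ - a)⁻¹ * H ζ - ζ⁻¹ * H ζ)) = (2 * π * I) * (H a - H 0) := by
  have hH' : DiffContOnCl ℂ H (ball (0:ℂ) 1) :=
    DifferentiableOn.diffContOnCl (by rwa [closure_ball (0:ℂ) one_ne_zero])
  have hamem : a ∈ ball (0:ℂ) 1 := by simpa [mem_ball, Complex.dist_eq] using ha
  have h0mem : (0:ℂ) ∈ ball (0:ℂ) 1 := mem_ball_self one_pos
  have h1 := hH'.circleIntegral_sub_inv_smul hamem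
  have h2 := hH'.circleIntegral_sub_inv_smul h0mem
  have hcont : ContinuousOn H (sphere (0:ℂ) 1) :=
    hH.continuousOn.mono sphere_subset_closedBall
  have hne : ∀ w : ℂ, ‖w‖ < 1 → ∀ ζ ∈ sphere (0:ℂ) 1, ζ - w ≠ 0 := by
    intro w hw ζ hζ
    have : ‖ζ‖ = 1 := by simpa [Complex.dist_eq] using hζ
    intro h
    rw [sub_eq_zero] at h
    rw [h] at this
    linarith
  have hi1 : CircleIntegrable (fun ζ => (ζ - a)⁻¹ * H ζ) 0 1 := by
    apply ContinuousOn.circleIntegrable zero_le_one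
    exact (ContinuousOn.inv₀ (by fun_prop) (fun ζ hζ => hne a ha ζ hζ)).mul hcont
  have hi2 : CircleIntegrable (fun ζ => ζ⁻¹ * H ζ) 0 1 := by
    apply ContinuousOn.circleIntegrable zero_le_one
    have := (ContinuousOn.inv₀ (f := fun ζ : ℂ => ζ - 0) (by fun_prop)
      (fun ζ hζ => hne 0 (by simp) ζ hζ)).mul hcont
    simp only [sub_zero] at this; exact this
  rw [circleIntegral.integral_sub hi1 hi2]
  simp only [smul_eq_mul] at h1 h2
  have h2' : (∮ ζ in C(0,1), ζ⁻¹ * H ζ) = 2 * π * I * H 0 := by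
    rw [← h2]; norm_num
  rw [h1, h2']; ring


lemma split_lem (ζ a B : ℂ) (hζ0 : ζ ≠ 0) (hζa : ζ - a ≠ 0) :
    (ζ - a)⁻¹ * B - ζ⁻¹ * B = B * a / (ζ * (ζ - a)) := by
  field_simp
  ring

lemma star_full (b d e ζ G : ℂ) (hb0 : b ≠ 0) (hd0 : d ≠ 0) (hζ0 : ζ ≠ 0)
    (hY : ζ⁻¹ - d ≠ 0) (hζa : ζ - 1 / d ≠ 0) :
    e * ζ⁻¹ * (ζ⁻¹ - 1 / b) / (ζ⁻¹ - d) * G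
      = (ζ - 1 / d)⁻¹ * (-e * (b - ζ) * G / (b * d * (1 / d)))
        - ζ⁻¹ * (-e * (b - ζ) * G / (b * d * (1 / d))) := by
  have hD : b * d * ζ * (ζ - 1 / d) ≠ 0 :=
    mul_ne_zero (mul_ne_zero (mul_ne_zero hb0 hd0) hζ0) hζa
  have h1 : e * ζ⁻¹ * (ζ⁻¹ - 1 / b) / (ζ⁻¹ - d) = -(e * (b - ζ)) / (b * d * ζ * (ζ - 1 / d)) := by
    rw [div_eq_div_iff hY hD]
    field_simp
    ring
  rw [h1, split_lem ζ (1 / d) _ hζ0 hζa]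
  field_simp

/-- first subcase `a = 1/b̄`: then `f(1/b̄) = 0 = f(0)`, the two quadrature
weights agree, `A = B = |c|²/|b|²`, and the moments
`M_k = (1/(2πi)) ∮_{∂D} f^k f* f' dζ` satisfy `M₀ = 2|c|²/|b|²` and `M_k = 0` for `k ≥ 1`. -/
theorem stmt_7 (a b c : ℂ) (ha : 0 < ‖a‖) (ha1 : ‖a‖ < 1)
    (hb : 1 < ‖b‖) (hc : c ≠ 0)
    (hab : a = 1 / (starRingEnd ℂ) b)
    (f : ℂ → ℂ) (hf : f = fun ζ => c * ζ * (ζ - a) / (ζ - b)) :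
    f (1 / (starRingEnd ℂ) b) = 0 ∧ f 0 = 0 ∧
    (((‖c‖ : ℝ) : ℂ) ^ 2 * a / b) = ((‖c‖ : ℝ) : ℂ) ^ 2 / ((‖b‖ : ℝ) : ℂ) ^ 2 ∧
    (((‖c‖ : ℝ) : ℂ) ^ 2 *
        (((starRingEnd ℂ) a - (starRingEnd ℂ) b) *
          (1 - 2 * ((‖b‖ : ℝ) : ℂ) ^ 2 + a * (starRingEnd ℂ) b * ((‖b‖ : ℝ) : ℂ) ^ 2)) /
        ((starRingEnd ℂ) b * (1 - ((‖b‖ : ℝ) : ℂ) ^ 2) ^ 2)) =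
      ((‖c‖ : ℝ) : ℂ) ^ 2 / ((‖b‖ : ℝ) : ℂ) ^ 2 ∧
    ((2 * π * Complex.I)⁻¹ *
        ∮ ζ in C(0, 1), f ζ ^ (0 : ℕ) * (starRingEnd ℂ) (f (1 / (starRingEnd ℂ) ζ)) * deriv f ζ) =
      2 * ((‖c‖ : ℝ) : ℂ) ^ 2 / ((‖b‖ : ℝ) : ℂ) ^ 2 ∧
    (∀ k : ℕ, 1 ≤ k →
      ((2 * π * Complex.I)⁻¹ *
          ∮ ζ in C(0, 1), f ζ ^ k * (starRingEnd ℂ) (f (1 / (starRingEnd ℂ) ζ)) * deriv f ζ) = 0) := by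
  -- basic nonvanishing facts
  have hb0 : b ≠ 0 := by
    intro h; rw [h] at hb; simp at hb; linarith
  have hcb : (starRingEnd ℂ) b ≠ 0 := by simpa using hb0
  have ha0 : a ≠ 0 := by
    intro h; rw [h] at ha; simp at ha
  have hca : (starRingEnd ℂ) a = 1 / b := by
    rw [hab]; simp
  have hbb : ((‖b‖ : ℝ) : ℂ) ^ 2 = b * (starRingEnd ℂ) b := by
    rw [Complex.mul_conj]; norm_cast; exact Complex.sq_norm b
  have hcc : ((‖c‖ : ℝ) : ℂ) ^ 2 = c * (starRingEnd ℂ) c := by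
    rw [Complex.mul_conj]; norm_cast; exact Complex.sq_norm c
  have hab1 : a * (starRingEnd ℂ) b = 1 := by
    rw [hab]; field_simp
  have haneb : a - b ≠ 0 := by
    intro h; rw [sub_eq_zero] at h; rw [h] at ha1; linarith
  have hbb1 : (1 : ℂ) - b * (starRingEnd ℂ) b ≠ 0 := by
    rw [← hbb]
    intro h
    have h2 : ((1 - ‖b‖ ^ 2 : ℝ) : ℂ) = 0 := by push_cast; linear_combination h
    rw [Complex.ofReal_eq_zero] at h2
    nlinarith
  -- derivative of f away from b
  have hderiv : ∀ z : ℂ, z ≠ b →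
      deriv f z = c * ((2 * z - a) * (z - b) - z * (z - a)) / (z - b) ^ 2 := by
    intro z hzb
    have h1 : HasDerivAt (fun z : ℂ => c * z * (z - a)) (c * (2 * z - a)) z := by
      have h0 := ((hasDerivAt_id z).const_mul c).mul ((hasDerivAt_id z).sub_const a)
      simp only [id_eq] at h0
      exact h0.congr_deriv (by ring)
    have h2 : HasDerivAt (fun z : ℂ => z - b) 1 z := (hasDerivAt_id z).sub_const b
    have h3 := h1.div h2 (sub_ne_zero.2 hzb)
    rw [hf]
    rw [show deriv (fun ζ => c * ζ * (ζ - a) / (ζ - b)) z = _ from h3.deriv]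
    ring
  -- the auxiliary holomorphic function
  set Bf : ℂ → ℂ := fun ζ =>
    -(starRingEnd ℂ) c * (b - ζ) *
      (c * ((2 * ζ - a) * (ζ - b) - ζ * (ζ - a)) / (ζ - b) ^ 2) / (b * (starRingEnd ℂ) b * a)
    with hBf
  have hHdiff : ∀ k : ℕ, DifferentiableOn ℂ
      (fun ζ => (c * ζ * (ζ - a) / (ζ - b)) ^ k * Bf ζ) (closedBall 0 1) := by
    intro k z hz
    have hzb : z - b ≠ 0 := by
      intro h
      rw [sub_eq_zero] at h
      have : ‖z‖ ≤ 1 := by simpa [Complex.dist_eq] using hz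
      rw [h] at this; linarith
    have d1 : DifferentiableAt ℂ (fun ζ : ℂ => c * ζ * (ζ - a)) z := by fun_prop
    have d2 : DifferentiableAt ℂ (fun ζ : ℂ => ζ - b) z := by fun_prop
    have d3 : DifferentiableAt ℂ (fun ζ : ℂ => (ζ - b) ^ 2) z := by fun_prop
    have d4 : DifferentiableAt ℂ (fun ζ : ℂ => c * ((2 * ζ - a) * (ζ - b) - ζ * (ζ - a))) z := by
      fun_prop
    have d5 : DifferentiableAt ℂ (fun ζ : ℂ => -(starRingEnd ℂ) c * (b - ζ)) z := by fun_prop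
    exact (((d1.div d2 hzb).pow k).mul
      ((d5.mul (d4.div d3 (pow_ne_zero 2 hzb))).div_const _)).differentiableWithinAt
  -- the key integral computation
  have key : ∀ k : ℕ,
      (∮ ζ in C(0, 1), f ζ ^ k * (starRingEnd ℂ) (f (1 / (starRingEnd ℂ) ζ)) * deriv f ζ)
        = 2 * π * I * ((c * a * (a - a) / (a - b)) ^ k * Bf a
            - (c * 0 * (0 - a) / (0 - b)) ^ k * Bf 0) := by
    intro k
    have hC := cauchy_two (fun ζ => (c * ζ * (ζ - a) / (ζ - b)) ^ k * Bf ζ) a ha1 (hHdiff k)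
    rw [← hC]
    apply circleIntegral.integral_congr zero_le_one
    intro ζ hζ
    beta_reduce
    have hζ1 : ‖ζ‖ = 1 := by simpa [Complex.dist_eq] using hζ
    have hζ0 : ζ ≠ 0 := by
      intro h; rw [h] at hζ1; simp at hζ1
    have hcζ0 : (starRingEnd ℂ) ζ ≠ 0 := by simpa using hζ0
    have hζconj : ζ * (starRingEnd ℂ) ζ = 1 := by
      rw [Complex.mul_conj]; norm_cast; rw [← Complex.sq_norm, hζ1]; norm_num
    have hinv : 1 / (starRingEnd ℂ) ζ = ζ := by
      rw [div_eq_iff hcζ0]; linear_combination -hζconj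
    have hcζ : (starRingEnd ℂ) ζ = ζ⁻¹ := eq_inv_of_mul_eq_one_right hζconj
    have hζb : ζ ≠ b := by intro h; rw [h] at hζ1; linarith
    have hζbne : ζ - b ≠ 0 := sub_ne_zero.2 hζb
    have hζa : ζ - a ≠ 0 := by
      intro h; rw [sub_eq_zero] at h; rw [h] at hζ1; linarith
    have hζa' : ζ - 1 / (starRingEnd ℂ) b ≠ 0 := by rw [← hab]; exact hζa
    have hdζ : ζ⁻¹ - (starRingEnd ℂ) b ≠ 0 := by
      rw [← hcζ]
      intro h
      rw [sub_eq_zero] at h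
      exact hζb (star_injective h)
    rw [hinv, hderiv ζ hζb]
    simp only [hf, hBf]
    rw [hab]
    simp only [map_div₀, map_mul, map_sub, map_one, Complex.conj_conj, hcζ]
    linear_combination star_full b ((starRingEnd ℂ) b) ((starRingEnd ℂ) c) ζ
      ((c * ζ * (ζ - 1 / (starRingEnd ℂ) b) / (ζ - b)) ^ k *
        (c * ((2 * ζ - 1 / (starRingEnd ℂ) b) * (ζ - b) - ζ * (ζ - 1 / (starRingEnd ℂ) b)) /
          (ζ - b) ^ 2)) hb0 hcb hζ0 hdζ hζa'
  have hπ : (2 * ↑π * I : ℂ) ≠ 0 := by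
    simp [Real.pi_ne_zero, Complex.I_ne_zero]
  refine ⟨?_, ?_, ?_, ?_, ?_, ?_⟩
  · rw [hf, ← hab]; simp
  · rw [hf]; simp
  · rw [hbb]
    field_simp
    linear_combination ((‖c‖ : ℝ) : ℂ) ^ 2 * hab1
  · rw [hbb, hcc, hca, hab]
    field_simp
    ring
  · rw [key 0]
    simp only [pow_zero, one_mul]
    rw [inv_mul_cancel_left₀ hπ]
    have hBa : Bf a = (starRingEnd ℂ) c * c / (b * (starRingEnd ℂ) b) := by
      rw [hBf]
      simp only
      field_simp [haneb]
      ring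
    have hB0 : Bf 0 = -((starRingEnd ℂ) c * c) / (b * (starRingEnd ℂ) b) := by
      rw [hBf]
      simp only
      field_simp
      ring
    rw [hBa, hB0, hcc, hbb]
    field_simp
    ring
  · intro k hk
    rw [key k]
    have hk0 : k ≠ 0 := Nat.one_le_iff_ne_zero.mp hk
    simp [sub_self, zero_pow hk0]
end

section
/- Let f(ζ) = c ζ(ζ−a)/(ζ−b) with 0 < |a| < 1 < |b|, c ≠ 0, and suppose ω_1 := b(1 − √(1−a/b)) satisfies ω_1 = 1/b̄ (i.e., the quadrature node 1/b̄ is a zero of f'). Then the weight B = |c|²(ā−b̄)(1−2|b|²+ab̄|b|²)/(b̄(1−|b|²)²) vanishes, and the quadrature identity reduces to the one-point identity (1/(2πi)) ∫_D g(ζ)|f'(ζ)|² dζ̄ dζ = A g(0) with A = 2|c|²/|b|² − |c|²/|b|⁴, for every g analytic and integrable with respect to |f'|² on D. -/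
set_option maxHeartbeats 1000000

open Complex MeasureTheory Metric Set
open scoped Real

section AuxLemmas
open intervalIntegral
/-- Integrability transfer to polar coordinates. -/
lemma aux_integrableOn_polar (φ : ℂ → ℂ) (hφ : Integrable φ) :
    IntegrableOn (fun p : ℝ × ℝ => p.1 • φ (Complex.polarCoord.symm p))
      polarCoord.target := by
  have hφ' : Integrable (fun p : ℝ × ℝ => φ (Complex.measurableEquivRealProd.symm p)) := by
    have := ((Complex.volume_preserving_equiv_real_prod.symm).integrable_comp_emb
      Complex.measurableEquivRealProd.symm.measurableEmbedding (g := φ)).mpr hφ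
    exact this
  set B : ℝ × ℝ → ℝ × ℝ →L[ℝ] ℝ × ℝ := fun p =>
    LinearMap.toContinuousLinearMap (Matrix.toLin (Module.Basis.finTwoProd ℝ) (Module.Basis.finTwoProd ℝ)
      !![Real.cos p.2, -p.1 * Real.sin p.2; Real.sin p.2, p.1 * Real.cos p.2]) with hB
  have A : ∀ p ∈ polarCoord.target, HasFDerivWithinAt polarCoord.symm (B p) polarCoord.target p :=
    fun p _ => (hasFDerivAt_polarCoord_symm p).hasFDerivWithinAt
  have B_det : ∀ p, (B p).det = p.1 := by
    intro p
    conv_rhs => rw [← one_mul p.1, ← Real.cos_sq_add_sin_sq p.2]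
    simp only [hB, neg_mul, LinearMap.det_toContinuousLinearMap, LinearMap.det_toLin,
      Matrix.det_fin_two_of, sub_neg_eq_add]
    ring
  have h1 : IntegrableOn (fun p : ℝ × ℝ => φ (Complex.measurableEquivRealProd.symm p))
      (polarCoord.symm '' polarCoord.target) := hφ'.integrableOn
  rw [integrableOn_image_iff_integrableOn_abs_det_fderiv_smul volume
    polarCoord.open_target.measurableSet A
    (polarCoord.symm.injOn) _] at h1
  refine h1.congr_fun (fun p hp => ?_) polarCoord.open_target.measurableSet
  beta_reduce
  rw [B_det, abs_of_pos hp.1]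
  rfl

lemma aux_polar (φ : ℂ → ℂ) (hφ : IntegrableOn φ (ball (0:ℂ) 1)) :
    ∫ ζ in ball (0:ℂ) 1, φ ζ
      = ∫ r in Ioo (0:ℝ) 1, ∫ θ in Ioo (-π) π, (r : ℂ) * φ (circleMap 0 r θ) := by
  classical
  set ψ : ℂ → ℂ := (ball (0:ℂ) 1).indicator φ with hψ
  have hψint : Integrable ψ := (integrable_indicator_iff measurableSet_ball).2 hφ
  have hsymm : ∀ (r θ : ℝ), Complex.polarCoord.symm (r, θ) = circleMap 0 r θ := by
    intro r θ
    simp [Complex.polarCoord_symm_apply, circleMap, Complex.exp_mul_I]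
  have habs : ∀ (r θ : ℝ), ‖circleMap 0 r θ‖ = |r| := by
    intro r θ
    simp [circleMap, norm_exp_ofReal_mul_I]
  have h0 : (∫ p in polarCoord.target, p.1 • ψ (Complex.polarCoord.symm p)) = ∫ z, ψ z :=
    Complex.integral_comp_polarCoord_symm ψ
  rw [hψ, MeasureTheory.integral_indicator measurableSet_ball] at h0
  rw [← h0]
  have hS : (Ioo (0:ℝ) 1 ×ˢ Ioo (-π) π) ⊆ polarCoord.target := by
    rw [polarCoord_target]
    exact prod_mono (Ioo_subset_Ioi_self) le_rfl
  have hmS : MeasurableSet (Ioo (0:ℝ) 1 ×ˢ Ioo (-π) π) :=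
    measurableSet_Ioo.prod measurableSet_Ioo
  have key : ∀ p ∈ polarCoord.target,
      p.1 • ψ (Complex.polarCoord.symm p)
        = (Ioo (0:ℝ) 1 ×ˢ Ioo (-π) π).indicator
            (fun p : ℝ × ℝ => p.1 • φ (Complex.polarCoord.symm p)) p := by
    rintro ⟨r, θ⟩ hp
    rw [polarCoord_target] at hp
    obtain ⟨hr, hθ⟩ := hp
    simp only [mem_Ioi] at hr
    have hmem : circleMap 0 r θ ∈ ball (0:ℂ) 1 ↔ r < 1 := by
      rw [mem_ball_zero_iff, habs, abs_of_pos hr]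
    by_cases h1 : r < 1
    · have hin : ((r,θ) : ℝ × ℝ) ∈ Ioo (0:ℝ) 1 ×ˢ Ioo (-π) π := ⟨⟨hr, h1⟩, hθ⟩
      rw [indicator_of_mem hin]
      simp only [hψ, hsymm]
      rw [indicator_of_mem (hmem.2 h1)]
    · rw [indicator_of_notMem (by simp [h1])]
      simp only [hψ, hsymm]
      rw [indicator_of_notMem (fun hm => h1 (hmem.1 hm)), smul_zero]
  rw [setIntegral_congr_fun polarCoord.open_target.measurableSet key,
    setIntegral_indicator hmS, inter_eq_self_of_subset_right hS]
  have hint : IntegrableOn (fun p : ℝ × ℝ => p.1 • φ (Complex.polarCoord.symm p))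
      (Ioo (0:ℝ) 1 ×ˢ Ioo (-π) π) := by
    refine ((aux_integrableOn_polar ψ hψint).mono_set hS).congr_fun ?_ hmS
    rintro ⟨r, θ⟩ hp
    have : Complex.polarCoord.symm (r, θ) ∈ ball (0:ℂ) 1 := by
      rw [hsymm, mem_ball_zero_iff, habs, abs_of_pos hp.1.1]
      exact hp.1.2
    simp only [hψ, indicator_of_mem this]
  rw [Measure.volume_eq_prod, setIntegral_prod _ (by rwa [← Measure.volume_eq_prod])]
  refine setIntegral_congr_fun measurableSet_Ioo (fun r hr => ?_)
  refine setIntegral_congr_fun measurableSet_Ioo (fun θ hθ => ?_)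
  rw [hsymm]
  simp [Complex.real_smul]

/-- Circle mean value property. -/
lemma aux_meanvalue {h : ℂ → ℂ} {r : ℝ} (hr : 0 < r)
    (hh : DiffContOnCl ℂ h (ball (0:ℂ) r)) :
    ∫ θ in (0:ℝ)..(2*π), h (circleMap 0 r θ) = 2 * π * h 0 := by
  have h1 := hh.circleIntegral_sub_inv_smul (mem_ball_self hr)
  rw [circleIntegral] at h1
  simp only [deriv_circleMap, smul_eq_mul, sub_zero] at h1
  have h2 : EqOn (fun θ : ℝ => circleMap 0 r θ * I * ((circleMap 0 r θ)⁻¹ * h (circleMap 0 r θ)))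
      (fun θ : ℝ => I * h (circleMap 0 r θ)) (Set.uIcc 0 (2*π)) := by
    intro θ _
    have hz : circleMap 0 r θ ≠ 0 := by
      simpa using circleMap_ne_center (c := 0) (R := r) hr.ne' (θ := θ)
    field_simp
  rw [intervalIntegral.integral_congr h2, intervalIntegral.integral_const_mul] at h1
  apply mul_left_cancel₀ I_ne_zero
  rw [h1]
  ring

/-- Cauchy-type formula for a double pole, via dslope. -/
lemma aux_cauchy_sq {h : ℂ → ℂ} {r : ℝ} (hr : 0 < r) {w : ℂ} (hw : w ∈ ball (0:ℂ) r)
    (hh : DiffContOnCl ℂ h (ball (0:ℂ) r)) :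
    ∫ θ in (0:ℝ)..(2*π),
        (circleMap 0 r θ)^2 * h (circleMap 0 r θ) / (circleMap 0 r θ - w)^2
      = 2*π*(h w + w * deriv h w) := by
  have hdA : DifferentiableAt ℂ h w :=
    hh.differentiableOn.differentiableAt (isOpen_ball.mem_nhds hw)
  set q : ℂ → ℂ := fun z => z * h z with hqdef
  have hqd : DiffContOnCl ℂ q (ball (0:ℂ) r) :=
    ⟨differentiableOn_id.mul hh.differentiableOn, continuousOn_id.mul hh.continuousOn⟩
  have hwd : DifferentiableAt ℂ q w := differentiableAt_id.mul hdA
  set H : ℂ → ℂ := dslope q w with hHdef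
  have hHd : DiffContOnCl ℂ H (ball (0:ℂ) r) := by
    constructor
    · exact (Complex.differentiableOn_dslope (isOpen_ball.mem_nhds hw)).mpr hqd.differentiableOn
    · rw [closure_ball 0 hr.ne']
      refine (continuousOn_dslope
        (Filter.mem_of_superset (isOpen_ball.mem_nhds hw) ball_subset_closedBall)).mpr ?_
      refine ⟨?_, hwd⟩
      have := hqd.continuousOn
      rwa [closure_ball 0 hr.ne'] at this
  have hHw : H w = h w + w * deriv h w := by
    rw [hHdef, dslope_same]
    have : HasDerivAt q (1 * h w + w * deriv h w) w :=
      (hasDerivAt_id w).mul hdA.hasDerivAt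
    rw [this.deriv]; ring
  have hne : ∀ θ : ℝ, circleMap 0 r θ ≠ w := by
    intro θ hcon
    have h1 : ‖circleMap 0 r θ‖ = r := by
      rw [norm_circleMap_zero, abs_of_pos hr]
    rw [hcon] at h1
    rw [mem_ball_zero_iff, h1] at hw
    exact lt_irrefl r hw
  have hcont_circ : Continuous fun θ : ℝ => circleMap 0 r θ := continuous_circleMap 0 r
  have hHcont : Continuous fun θ : ℝ => H (circleMap 0 r θ) := by
    have h1 : ContinuousOn H (closedBall (0:ℂ) r) := by
      have := hHd.continuousOn; rwa [closure_ball 0 hr.ne'] at this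
    exact h1.comp_continuous hcont_circ (fun θ => circleMap_mem_closedBall 0 hr.le θ)
  have hhcont : Continuous fun θ : ℝ => h (circleMap 0 r θ) := by
    have h1 : ContinuousOn h (closedBall (0:ℂ) r) := by
      have := hh.continuousOn; rwa [closure_ball 0 hr.ne'] at this
    exact h1.comp_continuous hcont_circ (fun θ => circleMap_mem_closedBall 0 hr.le θ)
  have hsubcont : Continuous fun θ : ℝ => circleMap 0 r θ - w := hcont_circ.sub continuous_const
  have hA : Continuous fun θ : ℝ => deriv (circleMap 0 r) θ •
      ((circleMap 0 r θ - w)⁻¹ • H (circleMap 0 r θ)) := by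
    simp only [deriv_circleMap, smul_eq_mul]
    exact ((hcont_circ.mul continuous_const)).mul
      ((hsubcont.inv₀ (fun θ => sub_ne_zero.mpr (hne θ))).mul hHcont)
  have hB : Continuous fun θ : ℝ => deriv (circleMap 0 r) θ •
      (q w * (circleMap 0 r θ - w)^(-2:ℤ)) := by
    have hz2 : (fun θ : ℝ => (circleMap 0 r θ - w)^(-2:ℤ))
        = fun θ : ℝ => ((circleMap 0 r θ - w)^2)⁻¹ := by
      funext θ; rw [zpow_neg, show ((2:ℤ)) = ((2:ℕ):ℤ) from rfl, zpow_natCast]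
    simp only [deriv_circleMap, smul_eq_mul, hz2]
    exact ((hcont_circ.mul continuous_const)).mul
      (continuous_const.mul ((hsubcont.pow 2).inv₀
        (fun θ => pow_ne_zero 2 (sub_ne_zero.mpr (hne θ)))))
  have E1 := hHd.circleIntegral_sub_inv_smul hw
  rw [circleIntegral] at E1
  have E2 : (∮ z in C(0, r), (z - w)^(-2:ℤ)) = 0 :=
    circleIntegral.integral_sub_zpow_of_ne (by decide) 0 w r
  rw [circleIntegral] at E2
  have hB0 : ∫ θ in (0:ℝ)..(2*π), deriv (circleMap 0 r) θ •
      (q w * (circleMap 0 r θ - w)^(-2:ℤ)) = 0 := by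
    have : (fun θ : ℝ => deriv (circleMap 0 r) θ • (q w * (circleMap 0 r θ - w)^(-2:ℤ)))
        = fun θ : ℝ => q w * (deriv (circleMap 0 r) θ • (circleMap 0 r θ - w)^(-2:ℤ)) := by
      funext θ; simp only [smul_eq_mul]; ring
    rw [this, intervalIntegral.integral_const_mul, E2, mul_zero]
  have key : EqOn (fun θ : ℝ => I * ((circleMap 0 r θ)^2 * h (circleMap 0 r θ)
      / (circleMap 0 r θ - w)^2))
      (fun θ : ℝ => deriv (circleMap 0 r) θ • ((circleMap 0 r θ - w)⁻¹ • H (circleMap 0 r θ))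
        + deriv (circleMap 0 r) θ • (q w * (circleMap 0 r θ - w)^(-2:ℤ)))
      (Set.uIcc 0 (2*π)) := by
    intro θ _
    have hz : circleMap 0 r θ - w ≠ 0 := sub_ne_zero.mpr (hne θ)
    simp only [deriv_circleMap, smul_eq_mul, zpow_neg]
    rw [hHdef, dslope_of_ne q (hne θ), slope_def_field]
    have h2 : ((circleMap 0 r θ - w) : ℂ)^(2:ℤ) = (circleMap 0 r θ - w)^2 := by
      rw [show ((2:ℤ)) = ((2:ℕ):ℤ) from rfl, zpow_natCast]
    rw [h2, hqdef]
    field_simp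
    ring
  apply mul_left_cancel₀ I_ne_zero
  rw [← intervalIntegral.integral_const_mul, intervalIntegral.integral_congr key,
    intervalIntegral.integral_add (hA.intervalIntegrable _ _) (hB.intervalIntegrable _ _),
    E1, hB0, hHw]
  simp only [smul_eq_mul]
  ring

lemma aux_inner {h : ℂ → ℂ} {r : ℝ} (hr : 0 < r) {w : ℂ} (hw : w ∈ ball (0:ℂ) r)
    (hh : DiffContOnCl ℂ h (ball (0:ℂ) r)) (c₁ c₂ : ℂ) (F : ℝ → ℂ)
    (hF : ∀ θ : ℝ, F θ = c₁ * h (circleMap 0 r θ)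
      + c₂ * ((circleMap 0 r θ)^2 * h (circleMap 0 r θ) / (circleMap 0 r θ - w)^2)) :
    ∫ θ in (0:ℝ)..(2*π), F θ
      = c₁ * (2*π* h 0) + c₂ * (2*π*(h w + w * deriv h w)) := by
  have hne : ∀ θ : ℝ, circleMap 0 r θ ≠ w := by
    intro θ hcon
    have h1 : ‖circleMap 0 r θ‖ = r := by
      rw [norm_circleMap_zero, abs_of_pos hr]
    rw [hcon] at h1
    rw [mem_ball_zero_iff, h1] at hw
    exact lt_irrefl r hw
  have hcont_circ : Continuous fun θ : ℝ => circleMap 0 r θ := continuous_circleMap 0 r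
  have hhcont : Continuous fun θ : ℝ => h (circleMap 0 r θ) := by
    have h1 : ContinuousOn h (closedBall (0:ℂ) r) := by
      have := hh.continuousOn; rwa [closure_ball 0 hr.ne'] at this
    exact h1.comp_continuous hcont_circ (fun θ => circleMap_mem_closedBall 0 hr.le θ)
  have hc1 : Continuous fun θ : ℝ => c₁ * h (circleMap 0 r θ) := continuous_const.mul hhcont
  have hc2 : Continuous fun θ : ℝ =>
      c₂ * ((circleMap 0 r θ)^2 * h (circleMap 0 r θ) / (circleMap 0 r θ - w)^2) := by
    refine continuous_const.mul (Continuous.div ((hcont_circ.pow 2).mul hhcont)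
      ((hcont_circ.sub continuous_const).pow 2) (fun θ => ?_))
    exact pow_ne_zero 2 (sub_ne_zero.mpr (hne θ))
  have : (fun θ : ℝ => F θ) = fun θ : ℝ => c₁ * h (circleMap 0 r θ)
      + c₂ * ((circleMap 0 r θ)^2 * h (circleMap 0 r θ) / (circleMap 0 r θ - w)^2) :=
    funext hF
  rw [this, intervalIntegral.integral_add (hc1.intervalIntegrable _ _)
      (hc2.intervalIntegrable _ _), intervalIntegral.integral_const_mul,
    intervalIntegral.integral_const_mul, aux_meanvalue hr hh, aux_cauchy_sq hr hw hh]

end AuxLemmas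

/-- second subcase: for `f(ζ) = cζ(ζ−a)/(ζ−b)` with `0<|a|<1<|b|`, `c ≠ 0`,
if the zero `ω₁ = b(1−√(1−a/b))` of `f'` satisfies `ω₁ = 1/b̄`, then the weight `B`
vanishes and the one-point quadrature identity
`(1/(2πi)) ∫_D g |f'|² dζ̄ dζ = A g(0)` with `A = 2|c|²/|b|² − |c|²/|b|⁴` holds
for every `g` analytic and `|f'|²`-integrable on the unit disk. -/
theorem stmt_9 (a b c : ℂ) (ha : 0 < ‖a‖) (ha1 : ‖a‖ < 1)
    (hb : 1 < ‖b‖) (hc : c ≠ 0)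
    (s : ℂ) (hs : s ^ 2 = 1 - a / b) (hω : b * (1 - s) = 1 / (starRingEnd ℂ) b)
    (f : ℂ → ℂ) (hf : f = fun ζ => c * ζ * (ζ - a) / (ζ - b)) :
    ((‖c‖ : ℂ) ^ 2 *
        (((starRingEnd ℂ) a - (starRingEnd ℂ) b) *
          (1 - 2 * (‖b‖ : ℂ) ^ 2 + a * (starRingEnd ℂ) b * (‖b‖ : ℂ) ^ 2)) /
        ((starRingEnd ℂ) b * (1 - (‖b‖ : ℂ) ^ 2) ^ 2)) = 0 ∧
    (∀ g : ℂ → ℂ, AnalyticOnNhd ℂ g (ball 0 1) →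
      IntegrableOn (fun ζ => g ζ * ((‖deriv f ζ‖ : ℂ)) ^ 2) (ball 0 1) →
      ((π : ℂ)⁻¹ * ∫ ζ in ball (0 : ℂ) 1, g ζ * ((‖deriv f ζ‖ : ℂ)) ^ 2) =
        (2 * (‖c‖ : ℂ) ^ 2 / (‖b‖ : ℂ) ^ 2 -
          (‖c‖ : ℂ) ^ 2 / (‖b‖ : ℂ) ^ 4) * g 0) := by
  have hb0 : b ≠ 0 := by
    intro h; rw [h] at hb; simp at hb; linarith
  have hcb : (starRingEnd ℂ) b ≠ 0 := by
    intro h; apply hb0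
    have := congrArg (starRingEnd ℂ) h; simpa using this
  have hs' : s ^ 2 * b = b - a := by
    field_simp at hs; linear_combination hs
  have hroot : ((starRingEnd ℂ) b)⁻¹ ^ 2 - 2 * b * ((starRingEnd ℂ) b)⁻¹ + a * b = 0 := by
    have h0 : (b * (1 - s)) ^ 2 - 2 * b * (b * (1 - s)) + a * b = 0 := by
      linear_combination b * hs'
    rw [hω, one_div] at h0
    exact h0
  have Ealg : a * b * ((starRingEnd ℂ) b) ^ 2 = 2 * (b * (starRingEnd ℂ) b) - 1 := by
    have hroot' := hroot
    field_simp at hroot'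
    have h1 : (starRingEnd ℂ) b * (a * b * ((starRingEnd ℂ) b) ^ 2
        - (2 * (b * (starRingEnd ℂ) b) - 1)) = (starRingEnd ℂ) b * 0 := by
      linear_combination (starRingEnd ℂ) b * hroot'
    have h2 := mul_left_cancel₀ hcb h1
    linear_combination h2
  have habs2 : ((‖b‖ : ℂ)) ^ 2 = b * (starRingEnd ℂ) b := by
    rw [← Complex.ofReal_pow, Complex.sq_norm, Complex.mul_conj]
  have hnum : (1 - 2 * (‖b‖ : ℂ) ^ 2
      + a * (starRingEnd ℂ) b * (‖b‖ : ℂ) ^ 2) = 0 := by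
    rw [habs2]
    linear_combination Ealg
  refine ⟨by rw [hnum, mul_zero, mul_zero, zero_div], ?_⟩
  intro g hg hgint
  set d : ℂ → ℂ := fun ζ => c * (ζ^2 - 2*b*ζ + a*b) / ((ζ - b)^2) with hd_def
  set h : ℂ → ℂ := fun ζ => g ζ * d ζ with hh_def
  set k : ℂ := (starRingEnd ℂ) a * (starRingEnd ℂ) b - ((starRingEnd ℂ) b)^2 with hk_def
  set w1 : ℂ := ((starRingEnd ℂ) b)⁻¹ with hw1_def
  have hζb : ∀ ζ ∈ ball (0:ℂ) 1, ζ ≠ b := by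
    intro ζ hζ hcon
    rw [mem_ball_zero_iff, hcon] at hζ
    linarith
  have hder : ∀ ζ : ℂ, ζ ≠ b → HasDerivAt f (d ζ) ζ := by
    intro ζ hζ
    have hzb : ζ - b ≠ 0 := sub_ne_zero.mpr hζ
    rw [hf]
    have h1 : HasDerivAt (fun ζ : ℂ => c * ζ * (ζ - a)) (c * (2*ζ - a)) ζ := by
      have := (((hasDerivAt_id ζ).const_mul c).mul ((hasDerivAt_id ζ).sub_const a))
      refine this.congr_deriv ?_
      simp; ring
    have h2 : HasDerivAt (fun ζ : ℂ => ζ - b) 1 ζ := (hasDerivAt_id ζ).sub_const b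
    have h3 := h1.div h2 hzb
    refine h3.congr_deriv ?_
    rw [hd_def]
    field_simp
    ring
  have hderiv_eq : ∀ ζ ∈ ball (0:ℂ) 1, deriv f ζ = d ζ :=
    fun ζ hζ => (hder ζ (hζb ζ hζ)).deriv
  have hd_diff : DifferentiableOn ℂ d (ball (0:ℂ) 1) := by
    intro ζ hζ
    have hzb : (ζ - b)^2 ≠ 0 := pow_ne_zero 2 (sub_ne_zero.mpr (hζb ζ hζ))
    refine DifferentiableAt.differentiableWithinAt ?_
    apply DifferentiableAt.div
    · fun_prop
    · fun_prop
    · exact hzb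
  have hh_diff : DifferentiableOn ℂ h (ball (0:ℂ) 1) :=
    (hg.differentiableOn).mul hd_diff
  have hh_anal : AnalyticOnNhd ℂ h (ball (0:ℂ) 1) :=
    hh_diff.analyticOnNhd isOpen_ball
  have hh_deriv_cont : ContinuousOn (deriv h) (ball (0:ℂ) 1) :=
    (hh_anal.deriv).continuousOn
  have habsb1 : (‖b‖)⁻¹ < 1 := by
    rw [inv_lt_one_iff₀]; right; exact hb
  have hw1ball : w1 ∈ ball (0:ℂ) 1 := by
    rw [mem_ball_zero_iff, hw1_def, norm_inv, Complex.norm_conj]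
    exact habsb1
  have hdw1 : d w1 = 0 := by
    rw [hd_def]
    simp only []
    rw [show (w1^2 - 2*b*w1 + a*b) = 0 from hroot]
    simp
  have hhw1 : h w1 = 0 := by rw [hh_def]; simp [hdw1]
  have sq_abs_c : ∀ z : ℂ, ((‖z‖ : ℂ))^2 = z * (starRingEnd ℂ) z := by
    intro z; rw [← Complex.ofReal_pow, Complex.sq_norm, Complex.mul_conj]
  have hEqOn : EqOn (fun ζ => g ζ * ((‖deriv f ζ‖ : ℂ))^2)
      (fun ζ => (starRingEnd ℂ) c * h ζ
        + ((starRingEnd ℂ) c * k) * (h ζ / (((starRingEnd ℂ) ζ - (starRingEnd ℂ) b))^2))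
      (ball (0:ℂ) 1) := by
    intro ζ hζ
    have hzb : ζ - b ≠ 0 := sub_ne_zero.mpr (hζb ζ hζ)
    have hzbc : (starRingEnd ℂ) ζ - (starRingEnd ℂ) b ≠ 0 := by
      intro hcon
      apply hzb
      have := congrArg (starRingEnd ℂ) hcon
      simpa using this
    simp only []
    rw [hderiv_eq ζ hζ, sq_abs_c, hh_def, hd_def, hk_def]
    simp only [map_div₀, map_mul, map_add, map_sub, map_pow, map_ofNat]
    field_simp
    ring
  rw [setIntegral_congr_fun measurableSet_ball hEqOn]
  have hφint : IntegrableOn (fun ζ => (starRingEnd ℂ) c * h ζ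
      + ((starRingEnd ℂ) c * k) * (h ζ / (((starRingEnd ℂ) ζ - (starRingEnd ℂ) b))^2))
      (ball (0:ℂ) 1) := hgint.congr_fun hEqOn measurableSet_ball
  rw [aux_polar _ hφint]
  have hDCC : ∀ r : ℝ, r ∈ Ioo (0:ℝ) 1 → DiffContOnCl ℂ h (ball (0:ℂ) r) := by
    rintro r ⟨hr0, hr1⟩
    refine ⟨hh_diff.mono (ball_subset_ball hr1.le), ?_⟩
    rw [closure_ball 0 hr0.ne']
    exact (hh_diff.continuousOn).mono (closedBall_subset_ball hr1)
  have habsb_pos : 0 < (‖b‖)⁻¹ := by positivity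
  have hwball : ∀ r : ℝ, r ∈ Ioo (0:ℝ) 1 → ((r:ℂ)^2 * w1) ∈ ball (0:ℂ) r := by
    rintro r ⟨hr0, hr1⟩
    rw [mem_ball_zero_iff, norm_mul, norm_pow, Complex.norm_real, Real.norm_eq_abs,
      abs_of_pos hr0, hw1_def, norm_inv, Complex.norm_conj]
    nlinarith [habsb_pos]
  have hinner : ∀ r ∈ Ioo (0:ℝ) 1,
      (∫ θ in Ioo (-π) π, (r:ℂ) * ((starRingEnd ℂ) c * h (circleMap 0 r θ)
        + ((starRingEnd ℂ) c * k) * (h (circleMap 0 r θ)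
          / (((starRingEnd ℂ) (circleMap 0 r θ) - (starRingEnd ℂ) b))^2)))
      = (r:ℂ) * ((starRingEnd ℂ) c * (2*(π:ℂ)* h 0)
          + ((starRingEnd ℂ) c * k / ((starRingEnd ℂ) b)^2)
            * (2*(π:ℂ)*(h ((r:ℂ)^2*w1) + ((r:ℂ)^2*w1) * deriv h ((r:ℂ)^2*w1)))) := by
    rintro r hr
    rw [MeasureTheory.integral_const_mul]
    congr 1
    rw [← MeasureTheory.integral_Ioc_eq_integral_Ioo,
      ← intervalIntegral.integral_of_le (by linarith [Real.pi_pos] : (-π:ℝ) ≤ π)]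
    have hper : Function.Periodic (fun θ : ℝ => ((starRingEnd ℂ) c * h (circleMap 0 r θ)
        + ((starRingEnd ℂ) c * k) * (h (circleMap 0 r θ)
          / (((starRingEnd ℂ) (circleMap 0 r θ) - (starRingEnd ℂ) b))^2))) (2*π) :=
      fun θ => by simp only; rw [(periodic_circleMap 0 r) θ]
    have hshift := hper.intervalIntegral_add_eq (-π) 0
    rw [show -π + 2*π = π by ring, zero_add] at hshift
    rw [hshift]
    refine aux_inner hr.1 (hwball r hr) (hDCC r hr) ((starRingEnd ℂ) c)
      ((starRingEnd ℂ) c * k / ((starRingEnd ℂ) b)^2) _ (fun θ => ?_)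
    have hz0 : circleMap 0 r θ ≠ 0 := circleMap_ne_center hr.1.ne'
    have habsz : ‖circleMap 0 r θ‖ = r := by
      rw [norm_circleMap_zero, abs_of_pos hr.1]
    have hzball : circleMap 0 r θ ∈ ball (0:ℂ) 1 := by
      rw [mem_ball_zero_iff, habsz]; exact hr.2
    have hzbc : (starRingEnd ℂ) (circleMap 0 r θ) - (starRingEnd ℂ) b ≠ 0 := by
      intro hcon
      apply sub_ne_zero.mpr (hζb _ hzball)
      have := congrArg (starRingEnd ℂ) hcon
      simpa using this
    have hzw : circleMap 0 r θ - (r:ℂ)^2*w1 ≠ 0 := by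
      refine sub_ne_zero.mpr (fun hcon => ?_)
      have h1 := hwball r hr
      rw [← hcon, mem_ball_zero_iff, habsz] at h1
      exact lt_irrefl r h1
    have hzz : circleMap 0 r θ * (starRingEnd ℂ) (circleMap 0 r θ) = ((r:ℂ))^2 := by
      have h1 : circleMap 0 r θ * (starRingEnd ℂ) (circleMap 0 r θ)
          = ((‖circleMap 0 r θ‖ : ℂ))^2 := (sq_abs_c _).symm
      rw [habsz] at h1
      push_cast at h1 ⊢
      linear_combination h1
    have hA : ((starRingEnd ℂ) (circleMap 0 r θ) - (starRingEnd ℂ) b)^2 ≠ 0 :=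
      pow_ne_zero 2 hzbc
    have hBne : (circleMap 0 r θ - (r:ℂ)^2*w1)^2 ≠ 0 := pow_ne_zero 2 hzw
    have key : h (circleMap 0 r θ) / ((starRingEnd ℂ) (circleMap 0 r θ) - (starRingEnd ℂ) b)^2
        = ((circleMap 0 r θ)^2 * h (circleMap 0 r θ) / (circleMap 0 r θ - (r:ℂ)^2 * w1)^2)
            / ((starRingEnd ℂ) b)^2 := by
      rw [div_div, div_eq_div_iff hA (mul_ne_zero hBne (pow_ne_zero 2 hcb))]
      have hB' : ((circleMap 0 r θ - (r:ℂ)^2*w1)^2 * ((starRingEnd ℂ) b)^2)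
          = ((starRingEnd ℂ) b * circleMap 0 r θ - (r:ℂ)^2)^2 := by
        rw [hw1_def]; field_simp
      rw [hB']
      linear_combination (h (circleMap 0 r θ) * (2*(starRingEnd ℂ) b*circleMap 0 r θ
        - (r:ℂ)^2 - circleMap 0 r θ*(starRingEnd ℂ) (circleMap 0 r θ))) * hzz
    congr 1
    rw [key]
    ring
  have hwx : ∀ x ∈ Icc (0:ℝ) 1, ((x:ℂ)^2*w1) ∈ ball (0:ℂ) 1 := by
    rintro x ⟨hx0, hx1⟩
    rw [mem_ball_zero_iff, norm_mul, norm_pow, Complex.norm_real, Real.norm_eq_abs,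
      hw1_def, norm_inv, Complex.norm_conj]
    have h1 : |x| ≤ 1 := abs_le.mpr ⟨by linarith, hx1⟩
    have h2 : |x|^2 ≤ 1 := by nlinarith [abs_nonneg x]
    calc |x|^2 * (‖b‖)⁻¹ ≤ 1 * (‖b‖)⁻¹ :=
          mul_le_mul_of_nonneg_right h2 (le_of_lt habsb_pos)
      _ < 1 := by rwa [one_mul]
  have houter : (∫ r in Ioo (0:ℝ) 1, (r:ℂ) * ((starRingEnd ℂ) c * (2*(π:ℂ)* h 0)
      + ((starRingEnd ℂ) c * k / ((starRingEnd ℂ) b)^2)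
        * (2*(π:ℂ)*(h ((r:ℂ)^2*w1) + ((r:ℂ)^2*w1) * deriv h ((r:ℂ)^2*w1)))))
      = (π:ℂ) * ((starRingEnd ℂ) c * h 0) := by
    rw [← MeasureTheory.integral_Ioc_eq_integral_Ioo,
      ← intervalIntegral.integral_of_le (zero_le_one)]
    have hΨ : ∀ x ∈ uIcc (0:ℝ) 1,
        HasDerivAt (fun t : ℝ => (starRingEnd ℂ) c * (2*(π:ℂ)* h 0) * ((t:ℂ)^2/2)
          + ((starRingEnd ℂ) c * k/((starRingEnd ℂ) b)^2) * ((t:ℂ)^2 * h ((t:ℂ)^2*w1) * (π:ℂ)))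
          ((x:ℂ) * ((starRingEnd ℂ) c * (2*(π:ℂ)* h 0)
            + ((starRingEnd ℂ) c * k / ((starRingEnd ℂ) b)^2)
              * (2*(π:ℂ)*(h ((x:ℂ)^2*w1) + ((x:ℂ)^2*w1) * deriv h ((x:ℂ)^2*w1))))) x := by
      intro x hx
      have hx' : x ∈ Icc (0:ℝ) 1 := by rwa [uIcc_of_le zero_le_one] at hx
      have hhd : DifferentiableAt ℂ h ((x:ℂ)^2*w1) :=
        hh_diff.differentiableAt (isOpen_ball.mem_nhds (hwx x hx'))
      have p1 : HasDerivAt (fun z : ℂ => z^2) (2*(x:ℂ)) ((x:ℂ)) := by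
        simpa using hasDerivAt_pow 2 ((x:ℂ))
      have h1 : HasDerivAt (fun z : ℂ => z^2*w1) (2*(x:ℂ)*w1) ((x:ℂ)) := by
        simpa using p1.mul_const w1
      have h2 : HasDerivAt (fun z : ℂ => h (z^2*w1))
          (deriv h ((x:ℂ)^2*w1) * (2*(x:ℂ)*w1)) ((x:ℂ)) := (hhd.hasDerivAt).comp (h := fun z : ℂ => z^2*w1) ((x:ℂ)) h1
      have h3 : HasDerivAt (fun z : ℂ => (starRingEnd ℂ) c * (2*(π:ℂ)* h 0) * (z^2/2)
          + ((starRingEnd ℂ) c * k/((starRingEnd ℂ) b)^2) * (z^2 * h (z^2*w1) * (π:ℂ)))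
          ((starRingEnd ℂ) c * (2*(π:ℂ)* h 0) * ((2*(x:ℂ))/2)
            + ((starRingEnd ℂ) c * k/((starRingEnd ℂ) b)^2)
              * ((2*(x:ℂ) * h ((x:ℂ)^2*w1)
                + (x:ℂ)^2 * (deriv h ((x:ℂ)^2*w1) * (2*(x:ℂ)*w1))) * (π:ℂ))) ((x:ℂ)) := by
        exact ((p1.div_const 2).const_mul _).add (((p1.mul h2).mul_const _).const_mul _)
      have h4 := h3.comp_ofReal
      convert h4 using 1
      ring
    have hGcont : ContinuousOn (fun t : ℝ => (t:ℂ) * ((starRingEnd ℂ) c * (2*(π:ℂ)* h 0)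
        + ((starRingEnd ℂ) c * k / ((starRingEnd ℂ) b)^2)
          * (2*(π:ℂ)*(h ((t:ℂ)^2*w1) + ((t:ℂ)^2*w1) * deriv h ((t:ℂ)^2*w1)))))
        (uIcc (0:ℝ) 1) := by
      have c1 : Continuous (fun t : ℝ => ((t:ℂ)^2 * w1)) :=
        (Complex.continuous_ofReal.pow 2).mul continuous_const
      have hmaps : MapsTo (fun t : ℝ => ((t:ℂ)^2*w1)) (uIcc (0:ℝ) 1) (ball (0:ℂ) 1) := by
        intro x hx
        exact hwx x (by rwa [uIcc_of_le zero_le_one] at hx)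
      have ch : ContinuousOn (fun t : ℝ => h ((t:ℂ)^2*w1)) (uIcc (0:ℝ) 1) :=
        (hh_diff.continuousOn).comp c1.continuousOn hmaps
      have cdh : ContinuousOn (fun t : ℝ => deriv h ((t:ℂ)^2*w1)) (uIcc (0:ℝ) 1) :=
        hh_deriv_cont.comp c1.continuousOn hmaps
      exact (Complex.continuous_ofReal.continuousOn).mul
        (continuousOn_const.add (continuousOn_const.mul (continuousOn_const.mul
          (ch.add ((c1.continuousOn).mul cdh)))))
    rw [intervalIntegral.integral_eq_sub_of_hasDerivAt hΨ (hGcont.intervalIntegrable)]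
    push_cast
    simp only [one_pow, one_mul, zero_pow, zero_mul, mul_zero, zero_add, zero_div, add_zero]
    rw [hhw1]
    ring
  rw [setIntegral_congr_fun measurableSet_Ioo (fun r hr => hinner r hr), houter]
  have hπ : (π:ℂ) ≠ 0 := Complex.ofReal_ne_zero.mpr Real.pi_ne_zero
  have habs4 : ((‖b‖:ℂ))^4 = (b*(starRingEnd ℂ) b)^2 := by
    rw [show ((‖b‖:ℂ))^4 = (((‖b‖:ℂ))^2)^2 by ring, sq_abs_c b]
  rw [hh_def]
  simp only []
  rw [hd_def]
  simp only []
  rw [sq_abs_c c, sq_abs_c b, habs4]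
  field_simp
  linear_combination ((starRingEnd ℂ) c * g 0 * b^2) * Ealg
end
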